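/- arXiv:2101.11324 — 2 statements merged into one kernel-verified Lean document; each statement's English description precedes it below -/
import Mathlib

section
/- For t > 0 define the reachable set R̄_{[-t,0]} = { e^{tA}z + ∫_{-t}^0 e^{-σA} B u(σ) dσ : z ∈ H, u ∈ L²(-t,0;U) }. Then R̄_{[-t,0]} ⊆ H; moreover, if the null controllability hypothesis holds, then R̄_{[-t,0]} = H for every t ≥ T₀. -/
open MeasureTheory Filter Topology Set ContinuousLinearMap
open scoped ENNReal NNReal

noncomputable section

local notation "⟪" x ", " y "⟫" => @inner ℝ _ _ x y

variable {X U : Type*}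
  [NormedAddCommGroup X] [InnerProductSpace ℝ X] [CompleteSpace X]
  [NormedAddCommGroup U] [InnerProductSpace ℝ U] [CompleteSpace U]
  [TopologicalSpace.SeparableSpace X] [TopologicalSpace.SeparableSpace U]

/-- A C₀-semigroup `S` on `X` with decay bound `‖S t‖ ≤ M e^{-ω t}`. -/
structure IsC0SemigroupDecay (S : ℝ → X →L[ℝ] X) (M ω : ℝ) : Prop where
  map_zero : S 0 = ContinuousLinearMap.id ℝ X
  map_add : ∀ s t : ℝ, 0 ≤ s → 0 ≤ t → S (s + t) = (S s).comp (S t)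
  strong_cont : ∀ x : X, ContinuousOn (fun t => S t x) (Ici (0:ℝ))
  M_pos : 0 < M
  omega_pos : 0 < ω
  norm_le : ∀ t : ℝ, 0 ≤ t → ‖S t‖ ≤ M * Real.exp (-ω * t)

/-- The controllability operator `Q_t x = ∫_0^t e^{rA} B B* e^{rA*} x dr`. -/
def Qop (S : ℝ → X →L[ℝ] X) (B : U →L[ℝ] X) (t : ℝ) (x : X) : X :=
  ∫ r in Ioc (0:ℝ) t, S r (B (adjoint B (adjoint (S r) x)))

/-- The controllability operator `Q_∞ x = ∫_0^∞ e^{rA} B B* e^{rA*} x dr`. -/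
def QopInf (S : ℝ → X →L[ℝ] X) (B : U →L[ℝ] X) (x : X) : X :=
  ∫ r in Ioi (0:ℝ), S r (B (adjoint B (adjoint (S r) x)))

/-- `T` is the (nonnegative selfadjoint) square root of `Q`. -/
def IsSqrtOf (T Q : X →L[ℝ] X) : Prop :=
  IsSelfAdjoint T ∧ (∀ x : X, (0:ℝ) ≤ ⟪T x, x⟫) ∧ T.comp T = Q

/-- `Qih` is the pseudoinverse of `Qh`: for `y` in the range of `Qh`, `Qih y` is the unique
element of `(ker Qh)ᗮ` mapped by `Qh` to `y`. -/
def IsPseudoInvOf (Qih : X → X) (Qh : X →L[ℝ] X) : Prop :=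
  ∀ y ∈ Set.range Qh, Qih y ∈ (LinearMap.ker (Qh : X →ₗ[ℝ] X))ᗮ ∧ Qh (Qih y) = y

/-- The inner product of the space `H = R(Q_∞^{1/2})`, expressed through the pseudoinverse
`Qih` of `Q_∞^{1/2}`. -/
def hInner (Qih : X → X) (x y : X) : ℝ := ⟪Qih x, Qih y⟫

/-- `A` (with domain `domA`) is the infinitesimal generator of the semigroup `S`. -/
def IsGenerator (S : ℝ → X →L[ℝ] X) (domA : Set X) (A : X → X) : Prop :=
  (∀ x : X, x ∈ domA ↔
      ∃ y : X, Tendsto (fun h : ℝ => h⁻¹ • (S h x - x)) (𝓝[>] (0:ℝ)) (𝓝 y)) ∧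
  ∀ x ∈ domA, Tendsto (fun h : ℝ => h⁻¹ • (S h x - x)) (𝓝[>] (0:ℝ)) (𝓝 (A x))

/-- `P` is a bounded nonnegative selfadjoint operator on `H` (viewed as a map `X → X`
defined on the subset `Hs` of `X`, with `H`-inner product induced by `Qih`). -/
def IsBddNonnegSelfAdjH (Qih : X → X) (Hs : Set X) (P : X → X) : Prop :=
  (∀ x ∈ Hs, P x ∈ Hs) ∧
  (∀ x ∈ Hs, ∀ y ∈ Hs, P (x + y) = P x + P y) ∧
  (∀ (c : ℝ), ∀ x ∈ Hs, P (c • x) = c • P x) ∧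
  (∃ C : ℝ, ∀ x ∈ Hs, ‖Qih (P x)‖ ≤ C * ‖Qih x‖) ∧
  (∀ x ∈ Hs, ∀ y ∈ Hs, hInner Qih (P x) y = hInner Qih x (P y)) ∧
  (∀ x ∈ Hs, 0 ≤ hInner Qih (P x) x)

/-- The set of controls `u ∈ L²(-t,0;U)` steering `0` (at time `-t`) to `x` (at time `0`). -/
def Adm (S : ℝ → X →L[ℝ] X) (B : U →L[ℝ] X) (t : ℝ) (u : ℝ → U) (x : X) : Prop :=
  MemLp u 2 (volume.restrict (Ioc (-t) (0:ℝ))) ∧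
    (∫ σ in Ioc (-t) (0:ℝ), S (-σ) (B (u σ))) = x

/-- The set of controls `u ∈ L²(-∞,0;U)` steering `0` (at time `-∞`) to `x` (at time `0`). -/
def AdmInf (S : ℝ → X →L[ℝ] X) (B : U →L[ℝ] X) (u : ℝ → U) (x : X) : Prop :=
  MemLp u 2 (volume.restrict (Iic (0:ℝ))) ∧
    (∫ τ in Iic (0:ℝ), S (-τ) (B (u τ))) = x

/-- The finite-horizon minimum energy `V(t,x)` (with value `⊤` when no admissible control). -/
def Vfin (S : ℝ → X →L[ℝ] X) (B : U →L[ℝ] X) (t : ℝ) (x : X) : ℝ≥0∞ :=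
  sInf {c : ℝ≥0∞ | ∃ u : ℝ → U, Adm S B t u x ∧
    c = ENNReal.ofReal (2⁻¹ * ∫ s in Ioc (-t) (0:ℝ), ‖u s‖ ^ 2)}

/-- The infinite-horizon minimum energy `V_∞(x)`. -/
def Vinf (S : ℝ → X →L[ℝ] X) (B : U →L[ℝ] X) (x : X) : ℝ≥0∞ :=
  sInf {c : ℝ≥0∞ | ∃ u : ℝ → U, AdmInf S B u x ∧
    c = ENNReal.ofReal (2⁻¹ * ∫ s in Iic (0:ℝ), ‖u s‖ ^ 2)}

/-- The value function `V^N(t,x)` of the auxiliary problem with initial cost operator `N`. -/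
def VN (S : ℝ → X →L[ℝ] X) (B : U →L[ℝ] X) (Qih : X → X) (Hs : Set X)
    (N : X → X) (t : ℝ) (x : X) : ℝ≥0∞ :=
  sInf {c : ℝ≥0∞ | ∃ z ∈ Hs, ∃ u : ℝ → U,
    MemLp u 2 (volume.restrict (Ioc (-t) (0:ℝ))) ∧
    S t z + (∫ σ in Ioc (-t) (0:ℝ), S (-σ) (B (u σ))) = x ∧
    c = ENNReal.ofReal (2⁻¹ * hInner Qih (N z) z + 2⁻¹ * ∫ s in Ioc (-t) (0:ℝ), ‖u s‖ ^ 2)}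

/-- The domain of `Λ_P`: those `x ∈ H` with `P x ∈ R(Q_∞)`. -/
def domLambda (Qinf : X →L[ℝ] X) (Hs : Set X) (P : X → X) : Set X :=
  {x ∈ Hs | P x ∈ Set.range Qinf}

/-- `P` belongs to the class `𝒬`: some `D ⊆ D(Λ_P) ∩ D(A)` is dense in `D(A) ∩ H`
w.r.t. the norm `‖·‖_H + ‖A·‖_X`. -/
def InClassQ (domA : Set X) (A : X → X) (Qih : X → X) (Qinf : X →L[ℝ] X)
    (Hs : Set X) (P : X → X) : Prop :=
  ∃ D : Set X, D ⊆ domLambda Qinf Hs P ∧ D ⊆ domA ∧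
    ∀ x ∈ domA ∩ Hs, ∀ ε > (0:ℝ), ∃ z ∈ D, ‖Qih (x - z)‖ + ‖A x - A z‖ < ε

/-- `P` is a solution of the algebraic Riccati equation in `H`:
`D(A) ∩ D(Λ_P)` is dense in `H` and
`0 = -⟨Ax, Λ_P y⟩_X - ⟨Λ_P x, Ay⟩_X - ⟨B*Λ_P x, B*Λ_P y⟩_U` on `D(A) ∩ D(Λ_P)`,
where `Λ_P = Q_∞^{-1} P` is realized through the pseudoinverse `Qi` of `Q_∞`. -/
def IsAREsolH (B : U →L[ℝ] X) (domA : Set X) (A : X → X) (Qih Qi : X → X)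
    (Qinf : X →L[ℝ] X) (Hs : Set X) (P : X → X) : Prop :=
  (∀ x ∈ Hs, ∀ ε > (0:ℝ), ∃ z ∈ domA ∩ domLambda Qinf Hs P, ‖Qih (x - z)‖ < ε) ∧
  ∀ x ∈ domA ∩ domLambda Qinf Hs P, ∀ y ∈ domA ∩ domLambda Qinf Hs P,
    (0:ℝ) = -⟪A x, Qi (P y)⟫ - ⟪Qi (P x), A y⟫ - ⟪adjoint B (Qi (P x)), adjoint B (Qi (P y))⟫


section AuxProofs

lemma norm_eq_ciSup (d : ℕ → X) (hd : DenseRange d) (v : X) :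
    ‖v‖ = ⨆ n, (if ‖d n‖ ≤ 1 then ⟪v, d n⟫ else 0) := by
  have hb : ∀ n, (if ‖d n‖ ≤ 1 then ⟪v, d n⟫ else 0) ≤ ‖v‖ := by
    intro n
    split_ifs with h
    · calc ⟪v, d n⟫ ≤ ‖v‖ * ‖d n‖ := real_inner_le_norm v (d n)
        _ ≤ ‖v‖ * 1 := by
            apply mul_le_mul_of_nonneg_left h (norm_nonneg v)
        _ = ‖v‖ := mul_one _
    · exact norm_nonneg v
  have hbdd : BddAbove (Set.range fun n => (if ‖d n‖ ≤ 1 then ⟪v, d n⟫ else 0)) := by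
    refine ⟨‖v‖, ?_⟩; rintro - ⟨n, rfl⟩; exact hb n
  refine le_antisymm ?_ (ciSup_le hb)
  refine le_of_forall_pos_le_add (fun ε hε => ?_)
  rcases eq_or_ne v 0 with rfl | hv
  · obtain ⟨n, hn⟩ := Metric.denseRange_iff.1 hd 0 1 one_pos
    have h1 : ‖d n‖ ≤ 1 := by
      have := hn; rw [dist_comm, dist_zero_right] at this; exact this.le
    have : (0:ℝ) ≤ ⨆ n, (if ‖d n‖ ≤ 1 then ⟪(0:X), d n⟫ else 0) := by
      have := le_ciSup hbdd n
      simpa [h1] using this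
    simpa using this.trans (le_add_of_nonneg_right hε.le) |>.trans (by simp)
  · set δ : ℝ := min (ε / (2 * ‖v‖)) (1/2) with hδdef
    have hvpos : 0 < ‖v‖ := norm_pos_iff.2 hv
    have hδpos : 0 < δ := lt_min (by positivity) (by norm_num)
    have hδhalf : δ ≤ 1/2 := min_le_right _ _
    set w : X := (( 1 - δ) / ‖v‖) • v with hw
    obtain ⟨n, hn⟩ := Metric.denseRange_iff.1 hd w δ hδpos
    rw [dist_comm, dist_eq_norm] at hn
    have hwnorm : ‖w‖ = 1 - δ := by
      rw [hw, norm_smul, Real.norm_eq_abs, abs_div, abs_of_nonneg (by linarith), abs_of_nonneg hvpos.le,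
        div_mul_cancel₀]
      exact hvpos.ne'
    have hdn : ‖d n‖ ≤ 1 := by
      calc ‖d n‖ ≤ ‖w‖ + ‖d n - w‖ := by
            simpa using norm_add_le w (d n - w)
        _ ≤ (1 - δ) + δ := by rw [hwnorm]; gcongr
        _ = 1 := by ring
    have hinner : ‖v‖ - 2 * δ * ‖v‖ ≤ ⟪v, d n⟫ := by
      have h1 : ⟪v, w⟫ = (1 - δ) * ‖v‖ := by
        rw [hw, real_inner_smul_right, real_inner_self_eq_norm_sq]
        field_simp
      have h2 : |⟪v, d n - w⟫| ≤ ‖v‖ * δ := by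
        calc |⟪v, d n - w⟫| ≤ ‖v‖ * ‖d n - w‖ := abs_real_inner_le_norm _ _
          _ ≤ ‖v‖ * δ := by gcongr
      have h3 : ⟪v, d n⟫ = ⟪v, w⟫ + ⟪v, d n - w⟫ := by
        rw [← inner_add_right, add_sub_cancel]
      nlinarith [abs_le.1 h2]
    have hsup := le_ciSup hbdd n
    rw [if_pos hdn] at hsup
    have : ‖v‖ - 2 * δ * ‖v‖ ≤ ⨆ n, (if ‖d n‖ ≤ 1 then ⟪v, d n⟫ else 0) := le_trans hinner hsup
    have hδε : 2 * δ * ‖v‖ ≤ ε := by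
      have : δ ≤ ε / (2 * ‖v‖) := min_le_left _ _
      calc 2 * δ * ‖v‖ ≤ 2 * (ε / (2 * ‖v‖)) * ‖v‖ := by gcongr
        _ = ε := by field_simp
    linarith

open Classical in
lemma pettis {μ : Measure ℝ} (f : ℝ → X)
    (hf : ∀ v : X, AEMeasurable (fun r => ⟪f r, v⟫) μ) :
    AEStronglyMeasurable f μ := by
  letI : MeasurableSpace X := borel X
  haveI : BorelSpace X := ⟨rfl⟩
  haveI : SecondCountableTopology X := UniformSpace.secondCountable_of_separable X
  haveI : Nonempty X := ⟨0⟩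
  set d : ℕ → X := TopologicalSpace.denseSeq X with hddef
  have hd : DenseRange d := TopologicalSpace.denseRange_denseSeq X
  -- a.e.-measurable norm distances
  have hnorm : ∀ y : X, AEMeasurable (fun r => ‖f r - y‖) μ := by
    intro y
    have : (fun r => ‖f r - y‖)
        = fun r => ⨆ n, (if ‖d n‖ ≤ 1 then ⟪f r - y, d n⟫ else 0) := by
      funext r; exact norm_eq_ciSup d hd (f r - y)
    rw [this]
    refine AEMeasurable.iSup (fun n => ?_)
    by_cases h : ‖d n‖ ≤ 1
    · simp only [h, if_true]
      have : (fun r => ⟪f r - y, d n⟫) = fun r => ⟪f r, d n⟫ - ⟪y, d n⟫ := by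
        funext r; rw [inner_sub_left]
      rw [this]
      exact (hf (d n)).sub aemeasurable_const
    · simp only [h, if_false]; exact aemeasurable_const
  set q : ℕ → ℝ → ℝ := fun n => (hnorm (d n)).mk _ with hqdef
  have hqm : ∀ n, Measurable (q n) := fun n => (hnorm (d n)).measurable_mk
  have hqae : ∀ᵐ r ∂μ, ∀ n, q n r = ‖f r - d n‖ :=
    ae_all_iff.2 fun n => ((hnorm (d n)).ae_eq_mk).symm
  -- approximating sequence
  have key : ∀ k : ℕ, ∃ g : ℝ → X, StronglyMeasurable g ∧
      ∀ r, (∀ n, q n r = ‖f r - d n‖) → ‖g r - f r‖ < 1/(k+1) := by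
    intro k
    set c : ℝ := 1/(k+1) with hc
    have hcpos : 0 < c := by positivity
    set p : ℝ → ℕ → Prop := fun r n => q n r < c ∨ (n = 0 ∧ ∀ m, ¬ q m r < c) with hp
    have htot : ∀ r, ∃ n, p r n := by
      intro r
      by_cases h : ∃ m, q m r < c
      · obtain ⟨m, hm⟩ := h; exact ⟨m, Or.inl hm⟩
      · push_neg at h; exact ⟨0, Or.inr ⟨rfl, fun m => not_lt.2 (h m)⟩⟩
    have hpm : ∀ n, MeasurableSet {r | p r n} := by
      intro n
      have h1 : MeasurableSet {r | q n r < c} := measurableSet_lt (hqm n) measurable_const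
      have h2 : MeasurableSet {r | n = 0 ∧ ∀ m, ¬ q m r < c} := by
        by_cases hn : n = 0
        · have : {r | n = 0 ∧ ∀ m, ¬ q m r < c} = ⋂ m, {r | ¬ q m r < c} := by
            ext r; simp [hn]
          rw [this]
          exact MeasurableSet.iInter fun m =>
            (measurableSet_lt (hqm m) measurable_const).compl
        · have : {r | n = 0 ∧ ∀ m, ¬ q m r < c} = ∅ := by ext r; simp [hn]
          rw [this]; exact MeasurableSet.empty
      exact h1.union h2
    have hnk : Measurable (fun r => Nat.find (htot r)) := measurable_find htot hpm
    refine ⟨fun r => d (Nat.find (htot r)), ?_, ?_⟩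
    · exact (measurable_from_nat.comp hnk).stronglyMeasurable
    · intro r hr
      have hspec := Nat.find_spec (htot r)
      have hex : ∃ m, q m r < c := by
        obtain ⟨m, hm⟩ := Metric.denseRange_iff.1 hd (f r) c hcpos
        refine ⟨m, ?_⟩
        rwa [hr m, ← dist_eq_norm]
      rcases hspec with h | h
      · rw [hr _] at h; rw [norm_sub_rev]; exact h
      · obtain ⟨m, hm⟩ := hex
        exact absurd hm (h.2 m)
  choose g hgm hgconv using key
  refine aestronglyMeasurable_of_tendsto_ae atTop (fun k => (hgm k).aestronglyMeasurable) ?_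
  filter_upwards [hqae] with r hr
  rw [tendsto_iff_dist_tendsto_zero]
  apply squeeze_zero (fun k => dist_nonneg) (fun k => (le_of_lt ?_)) tendsto_one_div_add_atTop_nhds_zero_nat
  rw [dist_eq_norm]
  exact hgconv k r hr

lemma comp_op_aestronglyMeasurable {μ : Measure ℝ} (T : ℝ → X →L[ℝ] X)
    (s : Set ℝ) (hs : MeasurableSet s)
    (hT : ∀ w : X, ContinuousOn (fun r => T r w) s)
    {v : ℝ → X} (hv : AEStronglyMeasurable v (μ.restrict s)) :
    AEStronglyMeasurable (fun r => T r (v r)) (μ.restrict s) := by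
  obtain ⟨v', hv'm, hv'⟩ := hv
  have main : AEStronglyMeasurable (fun r => T r (v' r)) (μ.restrict s) := by
    have happrox : ∀ n, AEStronglyMeasurable (fun r => T r (hv'm.approx n r)) (μ.restrict s) := by
      intro n
      induction (hv'm.approx n) using SimpleFunc.induction with
      | const c hA =>
        rename_i A
        have : (fun r => T r ((SimpleFunc.piecewise A hA (SimpleFunc.const ℝ c)
            (SimpleFunc.const ℝ 0)) r)) = A.indicator (fun r => T r c) := by
          funext r
          by_cases hr : r ∈ A <;>
            simp [SimpleFunc.piecewise_apply, hr, Set.indicator, map_zero]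
        rw [this]
        exact ((hT c).aestronglyMeasurable hs).indicator hA
      | @add φ ψ hdisj hφ hψ =>
        have : (fun r => T r ((φ + ψ) r)) = fun r => T r (φ r) + T r (ψ r) := by
          funext r; simp [map_add]
        rw [this]; exact hφ.add hψ
    refine aestronglyMeasurable_of_tendsto_ae atTop happrox ?_
    refine Eventually.of_forall (fun r => ?_)
    exact ((T r).continuous.tendsto _).comp (hv'm.tendsto_approx r)
  refine main.congr ?_
  filter_upwards [hv'] with r hr
  rw [hr]

lemma range_of_inner_le {K' : Type*} [NormedAddCommGroup K'] [InnerProductSpace ℝ K']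
    [CompleteSpace K'] (g : X →ₗ[ℝ] K') (h : K' → X)
    (hadj : ∀ (k : K') (x : X), ⟪h k, x⟫ = ⟪k, g x⟫)
    (y : X) (C : ℝ) (hy : ∀ x : X, |⟪y, x⟫| ≤ C * ‖g x‖) : ∃ k : K', h k = y := by
  classical
  set φ : X →ₗ[ℝ] ℝ := (innerSL ℝ y).toLinearMap with hφdef
  have hφ : ∀ x, φ x = ⟪y, x⟫ := fun x => rfl
  have hker : LinearMap.ker g ≤ LinearMap.ker φ := by
    intro x hx
    have hgx : g x = 0 := hx
    have := hy x
    rw [hgx] at this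
    simp only [norm_zero, mul_zero] at this
    have h0 : ⟪y, x⟫ = 0 := abs_eq_zero.1 (le_antisymm this (abs_nonneg _))
    show φ x = 0
    rw [hφ, h0]
  set e := LinearMap.quotKerEquivRange g with hedef
  set φq : (X ⧸ LinearMap.ker g) →ₗ[ℝ] ℝ := (LinearMap.ker g).liftQ φ hker with hφqdef
  set f₀ : LinearMap.range g →ₗ[ℝ] ℝ := φq.comp (e.symm.toLinearMap) with hf₀def
  have hf₀ : ∀ (x : X), f₀ ⟨g x, LinearMap.mem_range_self g x⟩ = ⟪y, x⟫ := by
    intro x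
    have h1 : e (Submodule.Quotient.mk x) = ⟨g x, LinearMap.mem_range_self g x⟩ :=
      Subtype.ext (g.quotKerEquivRange_apply_mk x)
    have h2 : e.symm ⟨g x, LinearMap.mem_range_self g x⟩ = Submodule.Quotient.mk x := by
      rw [← h1, LinearEquiv.symm_apply_apply]
    simp only [hf₀def, LinearMap.comp_apply, LinearEquiv.coe_toLinearMap, h2]
    show φq (Submodule.Quotient.mk x) = ⟪y, x⟫
    rw [hφqdef]
    erw [(LinearMap.ker g).liftQ_apply]
    exact hφ x
  set C' : ℝ := max C 0 with hC'
  have hbound : ∀ v : LinearMap.range g, ‖f₀ v‖ ≤ C' * ‖v‖ := by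
    rintro ⟨v, hv⟩
    obtain ⟨x, rfl⟩ := hv
    rw [hf₀ x]
    calc ‖⟪y, x⟫‖ = |⟪y, x⟫| := rfl
      _ ≤ C * ‖g x‖ := hy x
      _ ≤ C' * ‖g x‖ := by
          apply mul_le_mul_of_nonneg_right (le_max_left _ _) (norm_nonneg _)
      _ = C' * ‖(⟨g x, LinearMap.mem_range_self g x⟩ : LinearMap.range g)‖ := rfl
  set f₁ : (LinearMap.range g : Submodule ℝ K') →L[ℝ] ℝ := f₀.mkContinuous C' hbound with hf₁
  obtain ⟨F, hF, -⟩ := exists_extension_norm_eq (LinearMap.range g) f₁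
  set z := (InnerProductSpace.toDual ℝ K').symm F with hz
  refine ⟨z, ext_inner_right ℝ (fun x => ?_)⟩
  rw [hadj z x]
  have h1 : ⟪z, g x⟫ = F (g x) := InnerProductSpace.toDual_symm_apply
  have h2 : F (g x) = f₁ ⟨g x, LinearMap.mem_range_self g x⟩ :=
    hF ⟨g x, LinearMap.mem_range_self g x⟩
  have h3 : f₁ (⟨g x, LinearMap.mem_range_self g x⟩ : LinearMap.range g)
      = f₀ ⟨g x, LinearMap.mem_range_self g x⟩ := rfl
  rw [h1, h2, h3, hf₀ x]

section Analytic
variable {S : ℝ → X →L[ℝ] X} {M ω : ℝ} (hS : IsC0SemigroupDecay S M ω) (B : U →L[ℝ] X)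

-- abbreviations
local notation "Sd" => fun r => adjoint (S r)

include hS in
/-- weak continuity of the adjoint semigroup against a fixed vector -/
lemma adjcont (x v : X) : ContinuousOn (fun r => ⟪adjoint (S r) x, v⟫) (Ici (0:ℝ)) := by
  have : (fun r => ⟪adjoint (S r) x, v⟫) = fun r => ⟪x, S r v⟫ := by
    funext r; rw [adjoint_inner_left]
  rw [this]
  exact (continuous_const.inner continuous_id).comp_continuousOn (hS.strong_cont v)

include hS in
lemma adj_aesm (x : X) :
    AEStronglyMeasurable (fun r => adjoint (S r) x) (volume.restrict (Ioi (0:ℝ))) := by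
  apply pettis
  intro v
  exact ((adjcont hS x v).mono Ioi_subset_Ici_self).aemeasurable measurableSet_Ioi

include hS in
lemma adj_norm_le {r : ℝ} (hr : 0 ≤ r) (x : X) :
    ‖adjoint (S r) x‖ ≤ M * Real.exp (-ω * r) * ‖x‖ := by
  calc ‖adjoint (S r) x‖ ≤ ‖adjoint (S r)‖ * ‖x‖ := (adjoint (S r)).le_opNorm x
    _ ≤ M * Real.exp (-ω * r) * ‖x‖ := by
        apply mul_le_mul_of_nonneg_right _ (norm_nonneg x)
        calc ‖adjoint (S r)‖ = ‖S r‖ := by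
              rw [show adjoint (S r) = ContinuousLinearMap.adjoint (S r) from rfl]
              exact (ContinuousLinearMap.adjoint (E := X) (F := X)).norm_map (S r)
          _ ≤ M * Real.exp (-ω * r) := hS.norm_le r hr

include hS in
/-- integrability of the integrand of `Q_∞` -/
lemma F_integrable (x : X) :
    IntegrableOn (fun r => S r (B (adjoint B (adjoint (S r) x)))) (Ioi (0:ℝ)) := by
  constructor
  · apply comp_op_aestronglyMeasurable S (Ioi 0) measurableSet_Ioi
      (fun w => (hS.strong_cont w).mono Ioi_subset_Ici_self)
    exact (B.comp (adjoint B)).continuous.comp_aestronglyMeasurable (adj_aesm hS x)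
  · have hmaj : IntegrableOn
        (fun r => (M * ‖B‖ * (M * ‖B‖ * ‖x‖)) * Real.exp (-(2*ω) * r)) (Ioi (0:ℝ)) :=
      (exp_neg_integrableOn_Ioi 0 (by linarith [hS.omega_pos])).const_mul _
    apply HasFiniteIntegral.mono' hmaj.2
    filter_upwards [ae_restrict_mem measurableSet_Ioi] with r hr
    have hr0 : (0:ℝ) ≤ r := (le_of_lt hr)
    calc ‖S r (B (adjoint B (adjoint (S r) x)))‖
        ≤ ‖S r‖ * ‖B (adjoint B (adjoint (S r) x))‖ := (S r).le_opNorm _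
      _ ≤ (M * Real.exp (-ω * r)) * (‖B‖ * (‖B‖ * (M * Real.exp (-ω * r) * ‖x‖))) := by
          apply mul_le_mul (hS.norm_le r hr0) _ (norm_nonneg _)
            (mul_nonneg (le_of_lt hS.M_pos) (Real.exp_nonneg _))
          calc ‖B (adjoint B (adjoint (S r) x))‖ ≤ ‖B‖ * ‖adjoint B (adjoint (S r) x)‖ :=
                B.le_opNorm _
            _ ≤ ‖B‖ * (‖B‖ * ‖adjoint (S r) x‖) := by
                apply mul_le_mul_of_nonneg_left _ (norm_nonneg B)
                calc ‖adjoint B (adjoint (S r) x)‖ ≤ ‖adjoint B‖ * ‖adjoint (S r) x‖ :=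
                      (adjoint B).le_opNorm _
                  _ = ‖B‖ * ‖adjoint (S r) x‖ := by
                      rw [(ContinuousLinearMap.adjoint (E := U) (F := X)).norm_map B]
            _ ≤ ‖B‖ * (‖B‖ * (M * Real.exp (-ω * r) * ‖x‖)) := by
                apply mul_le_mul_of_nonneg_left _ (norm_nonneg B)
                apply mul_le_mul_of_nonneg_left (adj_norm_le hS hr0 x) (norm_nonneg B)
      _ = (M * ‖B‖ * (M * ‖B‖ * ‖x‖)) * (Real.exp (-ω * r) * Real.exp (-ω * r)) := by ring
      _ = (M * ‖B‖ * (M * ‖B‖ * ‖x‖)) * Real.exp (-(2*ω) * r) := by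
          rw [← Real.exp_add]; ring_nf

end Analytic

section Analytic2
variable {S : ℝ → X →L[ℝ] X} {M ω : ℝ} (hS : IsC0SemigroupDecay S M ω) (B : U →L[ℝ] X)

/-- the scalar density `ψ x r = ‖B* S r * x‖²` -/
def psi (S : ℝ → X →L[ℝ] X) (B : U →L[ℝ] X) (x : X) (r : ℝ) : ℝ :=
  ‖adjoint B (adjoint (S r) x)‖ ^ 2

lemma F_inner (x y : X) (r : ℝ) :
    ⟪S r (B (adjoint B (adjoint (S r) x))), y⟫
      = ⟪adjoint B (adjoint (S r) x), adjoint B (adjoint (S r) y)⟫ := by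
  rw [← adjoint_inner_right (S r), ← adjoint_inner_right B]

include hS in
lemma psi_integrableOn (x : X) : IntegrableOn (psi S B x) (Ioi (0:ℝ)) := by
  have h := (innerSL ℝ x).integrable_comp (F_integrable hS B x)
  apply h.congr
  filter_upwards with r
  show ⟪x, S r (B (adjoint B (adjoint (S r) x)))⟫ = psi S B x r
  rw [real_inner_comm, F_inner, real_inner_self_eq_norm_sq]
  rfl

include hS in
lemma Qinf_integral_inner (x : X) :
    ⟪∫ r in Ioi (0:ℝ), S r (B (adjoint B (adjoint (S r) x))), x⟫
      = ∫ r in Ioi (0:ℝ), psi S B x r := by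
  rw [real_inner_comm, ← integral_inner (F_integrable hS B x)]
  apply integral_congr_ae
  filter_upwards with r
  show ⟪x, S r (B (adjoint B (adjoint (S r) x)))⟫ = psi S B x r
  rw [real_inner_comm, F_inner, real_inner_self_eq_norm_sq]
  rfl

include hS in
lemma psi_shift {t : ℝ} (ht : 0 ≤ t) (x : X) :
    ∫ r in Ioi (0:ℝ), psi S B (adjoint (S t) x) r = ∫ r in Ioi t, psi S B x r := by
  have h1 : ∀ r ∈ Ioi (0:ℝ), psi S B (adjoint (S t) x) r = psi S B x (r + t) := by
    intro r hr
    have hr0 : (0:ℝ) ≤ r := (le_of_lt hr)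
    unfold psi
    have hc : S (t + r) = (S t).comp (S r) := hS.map_add t r ht hr0
    have hadj : adjoint (S (t + r)) = (adjoint (S r)).comp (adjoint (S t)) := by
      rw [hc, adjoint_comp]
    have harg : adjoint (S r) (adjoint (S t) x) = adjoint (S (r + t)) x := by
      rw [add_comm r t, hadj]; rfl
    rw [harg]
  rw [setIntegral_congr_fun measurableSet_Ioi h1]
  have := (measurePreserving_add_right volume t).setIntegral_preimage_emb
    (MeasurableEquiv.addRight t).measurableEmbedding (psi S B x) (Ioi t)
  have hpre : (fun x => x + t) ⁻¹' (Ioi t) = Ioi (0:ℝ) := by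
    ext r; simp [lt_add_iff_pos_left]
  rw [hpre] at this
  exact this

include hS in
lemma psi_split {t : ℝ} (ht : 0 < t) (x : X) :
    ∫ r in Ioi (0:ℝ), psi S B x r
      = (∫ r in Ioc (0:ℝ) t, psi S B x r) + ∫ r in Ioi t, psi S B x r := by
  rw [← setIntegral_union (Ioc_disjoint_Ioi le_rfl) measurableSet_Ioi
    ((psi_integrableOn hS B x).mono_set Ioc_subset_Ioi_self)
    ((psi_integrableOn hS B x).mono_set (Ioi_subset_Ioi ht.le)),
    Ioc_union_Ioi_eq_Ioi ht.le]

include hS in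
lemma psi_nonneg_mono {t : ℝ} (s : Set ℝ) (hs : MeasurableSet s) (hsub : s ⊆ Ioi (0:ℝ)) (x : X) :
    ∫ r in s, psi S B x r ≤ ∫ r in Ioi (0:ℝ), psi S B x r := by
  apply setIntegral_mono_set (psi_integrableOn hS B x)
  · filter_upwards with r using sq_nonneg _
  · exact HasSubset.Subset.eventuallyLE hsub

end Analytic2


section Analytic3
variable {S : ℝ → X →L[ℝ] X} {M ω : ℝ} (hS : IsC0SemigroupDecay S M ω) (B : U →L[ℝ] X)
variable {t : ℝ} (ht : 0 < t)

/-- the `L²` representative function -/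
def wfun (S : ℝ → X →L[ℝ] X) (B : U →L[ℝ] X) (x : X) (σ : ℝ) : U :=
  adjoint B (adjoint (S (-σ)) x)

lemma finiteIoc : IsFiniteMeasure (volume.restrict (Ioc (-t) (0:ℝ))) :=
  ⟨by rw [Measure.restrict_apply_univ, Real.volume_Ioc]; exact ENNReal.ofReal_lt_top⟩

lemma negIoc_cont {f : ℝ → ℝ} (hf : ContinuousOn f (Ici (0:ℝ))) :
    ContinuousOn (fun σ => f (-σ)) (Ioc (-t) (0:ℝ)) := by
  apply hf.comp continuous_neg.continuousOn
  intro σ hσ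
  simpa using hσ.2

include hS in
lemma wfun_memL2 (x : X) :
    MemLp (wfun S B x) 2 (volume.restrict (Ioc (-t) (0:ℝ))) := by
  haveI := finiteIoc (t := t)
  refine MemLp.of_bound ?_ (M * ‖B‖ * ‖x‖) ?_
  · apply pettis
    intro v
    have hcont : ContinuousOn (fun σ => ⟪wfun S B x σ, v⟫) (Ioc (-t) (0:ℝ)) := by
      have heq : (fun σ => ⟪wfun S B x σ, v⟫) = fun σ => ⟪x, S (-σ) (B v)⟫ := by
        funext σ
        unfold wfun
        rw [adjoint_inner_left, adjoint_inner_left]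
      rw [heq]
      have h2 : ContinuousOn (fun r => ⟪x, S r (B v)⟫) (Ici (0:ℝ)) :=
        (continuous_const.inner continuous_id).comp_continuousOn (hS.strong_cont (B v))
      apply h2.comp continuous_neg.continuousOn
      intro σ hσ; simpa using hσ.2
    exact hcont.aemeasurable measurableSet_Ioc
  · filter_upwards [ae_restrict_mem measurableSet_Ioc] with σ hσ
    have h0 : (0:ℝ) ≤ -σ := by simpa using hσ.2
    calc ‖wfun S B x σ‖ ≤ ‖adjoint B‖ * ‖adjoint (S (-σ)) x‖ := (adjoint B).le_opNorm _
      _ ≤ ‖B‖ * (M * Real.exp (-ω * (-σ)) * ‖x‖) := by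
          rw [(ContinuousLinearMap.adjoint (E := U) (F := X)).norm_map B]
          exact mul_le_mul_of_nonneg_left (adj_norm_le hS h0 x) (norm_nonneg B)
      _ ≤ ‖B‖ * (M * 1 * ‖x‖) := by
          apply mul_le_mul_of_nonneg_left _ (norm_nonneg B)
          apply mul_le_mul_of_nonneg_right _ (norm_nonneg x)
          apply mul_le_mul_of_nonneg_left _ hS.M_pos.le
          apply Real.exp_le_one_iff.2
          nlinarith [hS.omega_pos]
      _ = M * ‖B‖ * ‖x‖ := by ring

lemma wfun_sq_integral (x : X) :
    ∫ σ in Ioc (-t) (0:ℝ), ‖wfun S B x σ‖ ^ 2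
      = ∫ r in Ioc (0:ℝ) t, psi S B x r := by
  have key := (Measure.measurePreserving_neg volume).setIntegral_preimage_emb
    (MeasurableEquiv.neg ℝ).measurableEmbedding (psi S B x) (Ico 0 t)
  have hpre : (Neg.neg : ℝ → ℝ) ⁻¹' (Ico 0 t) = Ioc (-t) (0:ℝ) := by
    ext σ
    simp only [mem_preimage, mem_Ico, mem_Ioc]
    constructor
    · rintro ⟨h1, h2⟩; constructor <;> linarith
    · rintro ⟨h1, h2⟩; constructor <;> linarith
  rw [hpre] at key
  have : ∫ σ in Ioc (-t) (0:ℝ), ‖wfun S B x σ‖ ^ 2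
      = ∫ σ in Ioc (-t) (0:ℝ), psi S B x (-σ) := rfl
  rw [this, key, MeasureTheory.integral_Ico_eq_integral_Ioo,
    ← MeasureTheory.integral_Ioc_eq_integral_Ioo]

include hS in
lemma control_integrable {u : ℝ → U}
    (hu : MemLp u 2 (volume.restrict (Ioc (-t) (0:ℝ)))) :
    Integrable (fun σ => S (-σ) (B (u σ))) (volume.restrict (Ioc (-t) (0:ℝ))) := by
  haveI := finiteIoc (t := t)
  constructor
  · apply comp_op_aestronglyMeasurable (fun σ => S (-σ)) (Ioc (-t) 0) measurableSet_Ioc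
    · intro w
      apply (hS.strong_cont w).comp continuous_neg.continuousOn
      intro σ hσ; simpa using hσ.2
    · exact B.continuous.comp_aestronglyMeasurable hu.1
  · apply HasFiniteIntegral.mono' ((hu.integrable one_le_two).norm.const_mul (M * ‖B‖)).2
    filter_upwards [ae_restrict_mem measurableSet_Ioc] with σ hσ
    have h0 : (0:ℝ) ≤ -σ := by simpa using hσ.2
    calc ‖S (-σ) (B (u σ))‖ ≤ ‖S (-σ)‖ * ‖B (u σ)‖ := (S (-σ)).le_opNorm _
      _ ≤ (M * Real.exp (-ω * (-σ))) * (‖B‖ * ‖u σ‖) := by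
          apply mul_le_mul (hS.norm_le _ h0) (B.le_opNorm _) (norm_nonneg _)
            (mul_nonneg hS.M_pos.le (Real.exp_nonneg _))
      _ ≤ (M * 1) * (‖B‖ * ‖u σ‖) := by
          apply mul_le_mul_of_nonneg_right _ (by positivity)
          apply mul_le_mul_of_nonneg_left _ hS.M_pos.le
          apply Real.exp_le_one_iff.2
          nlinarith [hS.omega_pos]
      _ = M * ‖B‖ * ‖u σ‖ := by ring

include hS in
lemma control_pairing {u : ℝ → U}
    (hu : MemLp u 2 (volume.restrict (Ioc (-t) (0:ℝ)))) (x : X) :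
    ⟪∫ σ in Ioc (-t) (0:ℝ), S (-σ) (B (u σ)), x⟫
      = ∫ σ in Ioc (-t) (0:ℝ), ⟪u σ, wfun S B x σ⟫ := by
  rw [real_inner_comm, ← integral_inner (control_integrable hS B hu)]
  apply integral_congr_ae
  filter_upwards with σ
  show ⟪x, S (-σ) (B (u σ))⟫ = ⟪u σ, wfun S B x σ⟫
  unfold wfun
  rw [← adjoint_inner_left (S (-σ)), ← adjoint_inner_left B, real_inner_comm]

end Analytic3

section Main

set_option maxHeartbeats 1000000 in
theorem main_eq (S : ℝ → X →L[ℝ] X) (M ω : ℝ) (hS : IsC0SemigroupDecay S M ω)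
    (B : U →L[ℝ] X)
    (Qinf : X →L[ℝ] X) (hQinf : ∀ x, Qinf x = QopInf S B x)
    (Qh : X →L[ℝ] X) (hQh : IsSqrtOf Qh Qinf)
    {t : ℝ} (ht : 0 < t) :
    {x : X | ∃ z ∈ Set.range Qh, ∃ u : ℝ → U,
        MemLp u 2 (volume.restrict (Ioc (-t) (0:ℝ))) ∧
        x = S t z + ∫ σ in Ioc (-t) (0:ℝ), S (-σ) (B (u σ))} = Set.range Qh := by
  haveI := finiteIoc (t := t)
  set μ := volume.restrict (Ioc (-t) (0:ℝ)) with hμ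
  -- selfadjointness of Qh
  have hadjQh : adjoint Qh = Qh := by
    rw [← ContinuousLinearMap.star_eq_adjoint]; exact hQh.1
  have hQhsa : ∀ a b : X, ⟪Qh a, b⟫ = ⟪a, Qh b⟫ := by
    intro a b
    conv_lhs => rw [← hadjQh]
    rw [adjoint_inner_left]
  -- ⟪Q∞ x, x⟫ = ‖Qh x‖²
  have hQsq : ∀ x : X, ⟪Qinf x, x⟫ = ‖Qh x‖ ^ 2 := by
    intro x
    have h1 : Qinf x = Qh (Qh x) := by rw [← hQh.2.2]; rfl
    rw [h1, hQhsa, real_inner_self_eq_norm_sq]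
  have hQint : ∀ x : X, ⟪Qinf x, x⟫ = ∫ r in Ioi (0:ℝ), psi S B x r := by
    intro x
    rw [hQinf]
    show ⟪∫ r in Ioi (0:ℝ), S r (B (adjoint B (adjoint (S r) x))), x⟫ = _
    exact Qinf_integral_inner hS B x
  -- grand norm identity
  have hGnorm : ∀ x : X,
      (∫ σ in Ioc (-t) (0:ℝ), ‖wfun S B x σ‖ ^ 2) + ‖Qh (adjoint (S t) x)‖ ^ 2
        = ‖Qh x‖ ^ 2 := by
    intro x
    have h1 : ‖Qh (adjoint (S t) x)‖ ^ 2 = ∫ r in Ioi t, psi S B x r := by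
      rw [← hQsq, hQint, psi_shift hS B ht.le]
    rw [h1, wfun_sq_integral, ← psi_split hS B ht, ← hQint, hQsq]
  -- the product Hilbert space
  set K' := WithLp 2 ((Lp U 2 μ) × X) with hK'
  set eqv := WithLp.linearEquiv 2 ℝ ((Lp U 2 μ) × X) with heqv
  have hmem : ∀ x : X, MemLp (wfun S B x) 2 μ := fun x => wfun_memL2 hS B x
  -- the operator g
  set glin : X →ₗ[ℝ] K' :=
    { toFun := fun x => eqv.symm ((hmem x).toLp _, Qh (adjoint (S t) x)),
      map_add' := by
        intro a b
        have hw : wfun S B (a + b) = wfun S B a + wfun S B b := by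
          funext σ; unfold wfun; rw [map_add, map_add]; rfl
        have h1 : (hmem (a+b)).toLp _ = (hmem a).toLp _ + (hmem b).toLp _ := by
          rw [MemLp.toLp_congr (hmem (a+b)) ((hmem a).add (hmem b)) (by rw [hw]),
            MemLp.toLp_add]
        show eqv.symm _ = eqv.symm _ + eqv.symm _
        rw [← map_add]
        congr 1
        rw [h1, Prod.mk_add_mk, map_add, map_add]
      map_smul' := by
        intro c a
        have hw : wfun S B (c • a) = c • wfun S B a := by
          funext σ; unfold wfun; rw [_root_.map_smul, _root_.map_smul]; rfl
        have h1 : (hmem (c • a)).toLp _ = c • (hmem a).toLp _ := by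
          rw [MemLp.toLp_congr (hmem (c • a)) ((hmem a).const_smul c) (by rw [hw]),
            MemLp.toLp_const_smul]
        show eqv.symm _ = c • eqv.symm _
        rw [← _root_.map_smul]
        congr 1
        rw [h1, Prod.smul_mk, _root_.map_smul, _root_.map_smul] } with hglin
  set hfun : K' → X := fun p =>
    (∫ σ in Ioc (-t) (0:ℝ), S (-σ) (B (((eqv p).1 : ℝ → U) σ))) + S t (Qh (eqv p).2)
    with hhfun
  have hfst : ∀ x : X, ((eqv (glin x)).1 : Lp U 2 μ) = (hmem x).toLp _ := fun x => rfl
  have hsnd : ∀ x : X, ((eqv (glin x)).2 : X) = Qh (adjoint (S t) x) := fun x => rfl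
  -- adjoint relation
  have hadj : ∀ (p : K') (x : X), ⟪hfun p, x⟫ = ⟪p, glin x⟫ := by
    intro p x
    have hsplit : (⟪p, glin x⟫ : ℝ)
        = ⟪(eqv p).1, (hmem x).toLp _⟫ + ⟪(eqv p).2, Qh (adjoint (S t) x)⟫ := by
      rw [WithLp.prod_inner_apply]
      rfl
    have hL2 : (⟪(eqv p).1, (hmem x).toLp _⟫ : ℝ)
        = ∫ σ in Ioc (-t) (0:ℝ), ⟪((eqv p).1 : ℝ → U) σ, wfun S B x σ⟫ := by
      rw [MeasureTheory.L2.inner_def]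
      apply integral_congr_ae
      filter_upwards [(hmem x).coeFn_toLp] with σ hσ
      rw [hσ]
    have hpair := control_pairing hS B (Lp.memLp ((eqv p).1)) x
    have h2 : (⟪S t (Qh (eqv p).2), x⟫ : ℝ) = ⟪(eqv p).2, Qh (adjoint (S t) x)⟫ := by
      rw [← adjoint_inner_right (S t), hQhsa]
    rw [hhfun]
    simp only []
    rw [inner_add_left, hpair, h2, hsplit, hL2]
  -- norm identity
  have hnorm : ∀ x : X, ‖glin x‖ = ‖Qh x‖ := by
    intro x
    have h1 : ‖glin x‖ ^ 2 = ‖Qh x‖ ^ 2 := by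
      rw [← real_inner_self_eq_norm_sq, ← hGnorm x]
      have hsplit : (⟪glin x, glin x⟫ : ℝ)
          = ⟪(hmem x).toLp _, (hmem x).toLp _⟫
            + ⟪Qh (adjoint (S t) x), Qh (adjoint (S t) x)⟫ := by
        rw [WithLp.prod_inner_apply]; rfl
      rw [hsplit, ← real_inner_self_eq_norm_sq]
      congr 1
      rw [MeasureTheory.L2.inner_def]
      apply integral_congr_ae
      filter_upwards [(hmem x).coeFn_toLp] with σ hσ
      rw [hσ, real_inner_self_eq_norm_sq]
    have := congrArg Real.sqrt h1
    rwa [Real.sqrt_sq (norm_nonneg _), Real.sqrt_sq (norm_nonneg _)] at this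
  -- conclusion
  ext x₀
  constructor
  · rintro ⟨z, ⟨wz, rfl⟩, u, hu, rfl⟩
    set p : K' := eqv.symm (hu.toLp u, wz) with hp
    have hx₀ : S t (Qh wz) + (∫ σ in Ioc (-t) (0:ℝ), S (-σ) (B (u σ))) = hfun p := by
      simp only [hhfun]
      have h1 : ((eqv p).1 : Lp U 2 μ) = hu.toLp u := rfl
      have h2 : ((eqv p).2 : X) = wz := rfl
      rw [h1, h2, add_comm]
      congr 1
      apply integral_congr_ae
      filter_upwards [hu.coeFn_toLp] with σ hσ
      rw [hσ]
    rw [hx₀]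
    have hbd : ∀ x : X, |⟪hfun p, x⟫| ≤ ‖p‖ * ‖Qh x‖ := by
      intro x
      rw [hadj p x, ← hnorm x]
      exact abs_real_inner_le_norm p (glin x)
    exact range_of_inner_le (Qh : X →ₗ[ℝ] X) (⇑Qh)
      (fun k x => hQhsa k x) (hfun p) ‖p‖ hbd
  · rintro ⟨wz, rfl⟩
    have hbd : ∀ x : X, |⟪Qh wz, x⟫| ≤ ‖wz‖ * ‖glin x‖ := by
      intro x
      rw [hQhsa, hnorm x]
      exact abs_real_inner_le_norm wz (Qh x)
    obtain ⟨p, hp⟩ := range_of_inner_le glin hfun hadj (Qh wz) ‖wz‖ hbd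
    refine ⟨Qh (eqv p).2, ⟨(eqv p).2, rfl⟩, fun σ => ((eqv p).1 : ℝ → U) σ, Lp.memLp _, ?_⟩
    rw [← hp]
    simp only [hhfun]
    rw [add_comm]

end Main

end AuxProofs

/-- For `t > 0`, the reachable set
`R̄_{[-t,0]} = { e^{tA}z + ∫_{-t}^0 e^{-σA} B u(σ) dσ : z ∈ H, u ∈ L²(-t,0;U) }` satisfies
`R̄_{[-t,0]} ⊆ H`; moreover, under the null controllability hypothesis,
`R̄_{[-t,0]} = H` for every `t ≥ T₀`. Here `H = R(Q_∞^{1/2})`. -/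
theorem statement1
    (S : ℝ → X →L[ℝ] X) (M ω : ℝ) (hS : IsC0SemigroupDecay S M ω)
    (B : U →L[ℝ] X)
    (Qinf : X →L[ℝ] X) (hQinf : ∀ x, Qinf x = QopInf S B x)
    (Qh : X →L[ℝ] X) (hQh : IsSqrtOf Qh Qinf)
    (T₀ : ℝ) (hT₀ : 0 ≤ T₀)
    (QT : X →L[ℝ] X) (hQT : ∀ x, QT x = Qop S B T₀ x)
    (QTh : X →L[ℝ] X) (hQTh : IsSqrtOf QTh QT) :
    (∀ t > (0:ℝ),
      {x : X | ∃ z ∈ Set.range Qh, ∃ u : ℝ → U,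
          MemLp u 2 (volume.restrict (Ioc (-t) (0:ℝ))) ∧
          x = S t z + ∫ σ in Ioc (-t) (0:ℝ), S (-σ) (B (u σ))} ⊆ Set.range Qh) ∧
    (Set.range (S T₀) ⊆ Set.range QTh →
      ∀ t > (0:ℝ), T₀ ≤ t →
        {x : X | ∃ z ∈ Set.range Qh, ∃ u : ℝ → U,
            MemLp u 2 (volume.restrict (Ioc (-t) (0:ℝ))) ∧
            x = S t z + ∫ σ in Ioc (-t) (0:ℝ), S (-σ) (B (u σ))} = Set.range Qh) := by
  constructor
  · intro t ht
    exact (main_eq S M ω hS B Qinf hQinf Qh hQh ht).subset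
  · intro _ t ht _
    exact main_eq S M ω hS B Qinf hQinf Qh hQh ht

end
end

section
/- Under the commuting-case hypothesis, any solution P of the commuting-case ARE satisfies the symmetry identity ⟨A₀x, A₀Pz⟩_H = ⟨A₀Px, A₀z⟩_H for all x, z ∈ D^P. -/
open MeasureTheory Filter Topology Set ContinuousLinearMap
open scoped ENNReal NNReal

noncomputable section

local notation "⟪" x ", " y "⟫" => @inner ℝ _ _ x y

variable {X U : Type*}
  [NormedAddCommGroup X] [InnerProductSpace ℝ X] [CompleteSpace X]
  [NormedAddCommGroup U] [InnerProductSpace ℝ U] [CompleteSpace U]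
  [TopologicalSpace.SeparableSpace X] [TopologicalSpace.SeparableSpace U]

/-- `A₀` (with domain `domA0`) is the generator of the restriction of the semigroup `S`
to `H`, i.e. the infinitesimal generator with respect to the `H`-norm `‖Qih ·‖`. -/
def IsGeneratorH (S : ℝ → X →L[ℝ] X) (Qih : X → X) (Hs : Set X)
    (domA0 : Set X) (A0 : X → X) : Prop :=
  (∀ x : X, x ∈ domA0 ↔ x ∈ Hs ∧ ∃ y ∈ Hs,
      Tendsto (fun h : ℝ => ‖Qih (h⁻¹ • (S h x - x) - y)‖) (𝓝[>] (0:ℝ)) (𝓝 0)) ∧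
  ∀ x ∈ domA0, A0 x ∈ Hs ∧
    Tendsto (fun h : ℝ => ‖Qih (h⁻¹ • (S h x - x) - A0 x)‖) (𝓝[>] (0:ℝ)) (𝓝 0)

/-- Commuting-case hypothesis: the generator `A` is selfadjoint, `0 ∈ ρ(A)`, `A` commutes
with `BB*`, and `BB*` is coercive with constant `μ`. -/
structure CommCaseHyp (S : ℝ → X →L[ℝ] X) (B : U →L[ℝ] X)
    (domA : Set X) (A : X → X) (μ : ℝ) : Prop where
  gen : IsGenerator S domA A
  symm : ∀ x ∈ domA, ∀ y ∈ domA, ⟪A x, y⟫ = ⟪x, A y⟫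
  selfadj : ∀ y w : X, (∀ x ∈ domA, ⟪A x, y⟫ = ⟪x, w⟫) → y ∈ domA
  inv : ∃ Ainv : X →L[ℝ] X,
    (∀ x : X, Ainv x ∈ domA ∧ A (Ainv x) = x) ∧ ∀ x ∈ domA, Ainv (A x) = x
  comm : ∀ x ∈ domA, B (adjoint B x) ∈ domA ∧ A (B (adjoint B x)) = B (adjoint B (A x))
  mu_pos : 0 < μ
  coercive : ∀ x : X, μ * ‖x‖ ≤ ‖adjoint B x‖

/-- The set `D^P = {x ∈ D(A₀) : Px ∈ D(A₀)}`. -/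
def DPset (domA0 : Set X) (P : X → X) : Set X := {x ∈ domA0 | P x ∈ domA0}

/-- `P` is a solution of the commuting-case ARE:
`D^P` is dense in `H` and `0 = -⟨A₀x,Py⟩_H - ⟨Px,A₀y⟩_H + 2⟨A₀Px,Py⟩_H` on `D^P`. -/
def IsCommARESol (Qih : X → X) (Hs domA0 : Set X) (A0 P : X → X) : Prop :=
  (∀ x ∈ Hs, ∀ ε > (0:ℝ), ∃ z ∈ DPset domA0 P, ‖Qih (x - z)‖ < ε) ∧
  ∀ x ∈ DPset domA0 P, ∀ y ∈ DPset domA0 P,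
    (0:ℝ) = -(hInner Qih (A0 x) (P y)) - hInner Qih (P x) (A0 y)
      + 2 * hInner Qih (A0 (P x)) (P y)


section AuxiliaryForStatement12
set_option linter.unusedSectionVars false
set_option maxHeartbeats 1000000

variable {Y V : Type*}
  [NormedAddCommGroup Y] [InnerProductSpace ℝ Y] [CompleteSpace Y]
  [NormedAddCommGroup V] [InnerProductSpace ℝ V] [CompleteSpace V]
variable {S : ℝ → Y →L[ℝ] Y} {M ω : ℝ} {B : V →L[ℝ] Y} {domA : Set Y} {A : Y → Y} {μ : ℝ}
variable {Qinf Qh : Y →L[ℝ] Y} {Qih : Y → Y}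

lemma S_norm_le (hS : IsC0SemigroupDecay S M ω) {t : ℝ} (ht : 0 ≤ t) : ‖S t‖ ≤ M := by
  have h1 := hS.norm_le t ht
  have h2 : Real.exp (-ω * t) ≤ 1 := by
    rw [Real.exp_le_one_iff]
    nlinarith [hS.omega_pos]
  nlinarith [hS.M_pos]

lemma S_apply_le (hS : IsC0SemigroupDecay S M ω) {t : ℝ} (ht : 0 ≤ t) (x : Y) :
    ‖S t x‖ ≤ M * ‖x‖ :=
  le_trans ((S t).le_opNorm x) (mul_le_mul_of_nonneg_right (S_norm_le hS ht) (norm_nonneg x))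

lemma S_comp_apply (hS : IsC0SemigroupDecay S M ω) {s t : ℝ} (hs : 0 ≤ s) (ht : 0 ≤ t) (x : Y) :
    S s (S t x) = S (s + t) x := by
  rw [hS.map_add s t hs ht]; rfl

lemma S_domA (hS : IsC0SemigroupDecay S M ω) (hgen : IsGenerator S domA A)
    {x : Y} (hx : x ∈ domA) {t : ℝ} (ht : 0 ≤ t) :
    S t x ∈ domA ∧ A (S t x) = S t (A x) := by
  have key : ∀ h : ℝ, 0 < h → h⁻¹ • (S h (S t x) - S t x) = S t (h⁻¹ • (S h x - x)) := by
    intro h hh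
    have e : S h (S t x) = S t (S h x) := by
      rw [S_comp_apply hS hh.le ht, add_comm, ← S_comp_apply hS ht hh.le]
    rw [e, ← (S t).map_sub, ← (S t).map_smul]
  have T : Tendsto (fun h : ℝ => h⁻¹ • (S h (S t x) - S t x)) (𝓝[>] (0:ℝ)) (𝓝 (S t (A x))) := by
    have T0 : Tendsto (fun h : ℝ => S t (h⁻¹ • (S h x - x))) (𝓝[>] (0:ℝ)) (𝓝 (S t (A x))) := by
      exact ((S t).continuous.tendsto (A x)).comp (hgen.2 x hx)
    refine T0.congr' ?_
    filter_upwards [self_mem_nhdsWithin] with h hh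
    exact (key h hh).symm
  have hmem : S t x ∈ domA := (hgen.1 (S t x)).mpr ⟨_, T⟩
  exact ⟨hmem, tendsto_nhds_unique (hgen.2 _ hmem) T⟩

lemma hasDerivWithinAt_of_quot {E : Type*} [NormedAddCommGroup E] [NormedSpace ℝ E]
    {f : ℝ → E} {s : ℝ} {L : E}
    (hf : Tendsto (fun h : ℝ => h⁻¹ • (f (s + h) - f s)) (𝓝[>] (0:ℝ)) (𝓝 L)) :
    HasDerivWithinAt f L (Ici s) s := by
  rw [hasDerivWithinAt_iff_tendsto_slope, Set.Ici_sdiff_left]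
  have hmap : Tendsto (fun u : ℝ => u - s) (𝓝[>] s) (𝓝[>] (0:ℝ)) := by
    apply tendsto_nhdsWithin_of_tendsto_nhds_of_eventually_within
    · have : Tendsto (fun u : ℝ => u - s) (𝓝 s) (𝓝 (s - s)) :=
        (continuous_id.sub continuous_const).tendsto s
      simpa using this.mono_left nhdsWithin_le_nhds
    · filter_upwards [self_mem_nhdsWithin] with u hu
      exact sub_pos.mpr (Set.mem_Ioi.mp hu)
  refine (hf.comp hmap).congr fun u => ?_
  have hu : s + (u - s) = u := by ring
  simp only [Function.comp_apply, hu, slope_def_module]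

lemma domA_dense (hcc : CommCaseHyp S B domA A μ) : Dense domA := by
  obtain ⟨Ainv, h1, _h2⟩ := hcc.inv
  have hsymm : ∀ z w : Y, ⟪Ainv z, w⟫ = ⟪z, Ainv w⟫ := by
    intro z w
    have h := hcc.symm (Ainv z) (h1 z).1 (Ainv w) (h1 w).1
    rw [(h1 z).2, (h1 w).2] at h
    exact h.symm
  have hsub : (LinearMap.range (Ainv : Y →ₗ[ℝ] Y) : Set Y) ⊆ domA := by
    rintro x ⟨z, rfl⟩; exact (h1 z).1
  refine Dense.mono hsub ?_
  have horth : (LinearMap.range (Ainv : Y →ₗ[ℝ] Y))ᗮ = ⊥ := by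
    rw [Submodule.eq_bot_iff]
    intro w hw
    have h0 : ∀ z : Y, ⟪z, Ainv w⟫ = 0 := by
      intro z
      rw [← hsymm]
      exact (Submodule.mem_orthogonal _ w).mp hw (Ainv z) ⟨z, rfl⟩
    have hA0 : Ainv w = 0 := by
      have := h0 (Ainv w)
      exact inner_self_eq_zero.mp this
    calc w = A (Ainv w) := ((h1 w).2).symm
      _ = A (Ainv 0) := by rw [hA0, map_zero]
      _ = 0 := (h1 0).2
  have htop := Submodule.topologicalClosure_eq_top_iff.mpr horth
  rw [dense_iff_closure_eq, ← Submodule.topologicalClosure_coe, htop, Submodule.top_coe]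

lemma tendsto_S_shift (hS : IsC0SemigroupDecay S M ω) {c : ℝ} (hc : 0 < c) (y : Y) :
    Tendsto (fun h : ℝ => S (c - h) y) (𝓝[>] (0:ℝ)) (𝓝 (S c y)) := by
  have hbase : Tendsto (fun h : ℝ => c - h) (𝓝[>] (0:ℝ)) (𝓝[Ici 0] c) := by
    apply tendsto_nhdsWithin_of_tendsto_nhds_of_eventually_within
    · have : Tendsto (fun h : ℝ => c - h) (𝓝 (0:ℝ)) (𝓝 (c - 0)) :=
        (continuous_const.sub continuous_id).tendsto 0
      simpa using this.mono_left nhdsWithin_le_nhds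
    · filter_upwards [Ioo_mem_nhdsGT_of_mem (Set.left_mem_Ico.mpr hc)] with h hh
      exact sub_nonneg.mpr hh.2.le
  exact Filter.Tendsto.comp (hS.strong_cont y c (Set.mem_Ici.mpr hc.le)) hbase

lemma tendsto_S_shift_apply (hS : IsC0SemigroupDecay S M ω) {c : ℝ} (hc : 0 < c)
    {w : ℝ → Y} {L : Y} (hw : Tendsto w (𝓝[>] (0:ℝ)) (𝓝 L)) :
    Tendsto (fun h : ℝ => S (c - h) (w h)) (𝓝[>] (0:ℝ)) (𝓝 (S c L)) := by
  have t1 : Tendsto (fun h : ℝ => S (c - h) (w h - L)) (𝓝[>] (0:ℝ)) (𝓝 0) := by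
    have hb : ∀ᶠ h in 𝓝[>] (0:ℝ), ‖S (c - h) (w h - L)‖ ≤ M * ‖w h - L‖ := by
      filter_upwards [Ioo_mem_nhdsGT_of_mem (Set.left_mem_Ico.mpr hc)] with h hh
      exact S_apply_le hS (sub_nonneg.mpr hh.2.le) _
    have hg : Tendsto (fun h : ℝ => M * ‖w h - L‖) (𝓝[>] (0:ℝ)) (𝓝 0) := by
      have := ((hw.sub (tendsto_const_nhds (x := L))).norm).const_mul M
      simpa using this
    exact squeeze_zero_norm' hb hg
  have t2 := tendsto_S_shift hS hc L
  have t3 := t1.add t2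
  simp only [zero_add] at t3
  refine t3.congr fun h => ?_
  rw [← (S (c - h)).map_add, sub_add_cancel]

lemma contOn_S_app (hS : IsC0SemigroupDecay S M ω) {s : Set ℝ} {φ : ℝ → ℝ} {w : ℝ → Y}
    (hφ : ContinuousOn φ s) (hφ0 : ∀ r ∈ s, 0 ≤ φ r) (hw : ContinuousOn w s) :
    ContinuousOn (fun r => S (φ r) (w r)) s := by
  intro r0 hr0
  have hbase : Tendsto φ (𝓝[s] r0) (𝓝[Ici 0] (φ r0)) := by
    apply tendsto_nhdsWithin_of_tendsto_nhds_of_eventually_within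
    · exact hφ r0 hr0
    · filter_upwards [self_mem_nhdsWithin] with r hr
      exact hφ0 r hr
  have t2 : Tendsto (fun r => S (φ r) (w r0)) (𝓝[s] r0) (𝓝 (S (φ r0) (w r0))) :=
    Filter.Tendsto.comp (hS.strong_cont (w r0) (φ r0) (hφ0 r0 hr0)) hbase
  have t1 : Tendsto (fun r => S (φ r) (w r - w r0)) (𝓝[s] r0) (𝓝 0) := by
    have hb : ∀ᶠ r in 𝓝[s] r0, ‖S (φ r) (w r - w r0)‖ ≤ M * ‖w r - w r0‖ := by
      filter_upwards [self_mem_nhdsWithin] with r hr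
      exact S_apply_le hS (hφ0 r hr) _
    have hg : Tendsto (fun r : ℝ => M * ‖w r - w r0‖) (𝓝[s] r0) (𝓝 0) := by
      have := (((hw r0 hr0).sub (tendsto_const_nhds (x := w r0))).norm).const_mul M
      simpa using this.tendsto
    exact squeeze_zero_norm' hb hg
  have t3 := t1.add t2
  simp only [zero_add] at t3
  have : ContinuousWithinAt (fun r => S (φ r) (w r)) s r0 := by
    refine Filter.Tendsto.congr (fun r => ?_) t3
    rw [← (S (φ r)).map_add, sub_add_cancel]
  exact this

lemma Ssym (hS : IsC0SemigroupDecay S M ω) (hcc : CommCaseHyp S B domA A μ)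
    {t : ℝ} (ht : 0 ≤ t) (x y : Y) : ⟪S t x, y⟫ = ⟪x, S t y⟫ := by
  have main : ∀ x ∈ domA, ∀ y ∈ domA, ⟪S t x, y⟫ = ⟪x, S t y⟫ := by
    intro x hx y hy
    rcases eq_or_lt_of_le ht with h0 | hpos
    · rw [← h0, hS.map_zero]; rfl
    · set f : ℝ → ℝ := fun s => ⟪S s x, S (t - s) y⟫ with hfdef
      have hcont : ContinuousOn f (Icc 0 t) := by
        apply ContinuousOn.inner
        · exact (hS.strong_cont x).mono (fun s hs => hs.1)
        · refine ContinuousOn.comp (hS.strong_cont y)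
            (continuousOn_const.sub continuousOn_id) ?_
          intro s hs
          exact Set.mem_Ici.mpr (sub_nonneg.mpr hs.2)
      have hderiv : ∀ s ∈ Ico 0 t, HasDerivWithinAt f 0 (Ici s) s := by
        intro s hs
        apply hasDerivWithinAt_of_quot
        have hts : 0 < t - s := sub_pos.mpr hs.2
        have hSx := S_domA hS hcc.gen hx hs.1
        have hSy := S_domA hS hcc.gen hy hts.le
        have hzero : ⟪S s (A x), S (t - s) y⟫ - ⟪S s x, S (t - s) (A y)⟫ = 0 := by
          rw [← hSx.2, ← hSy.2, hcc.symm _ hSx.1 _ hSy.1, sub_self]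
        have T1 : Tendsto (fun h : ℝ => S s (h⁻¹ • (S h x - x))) (𝓝[>] (0:ℝ))
            (𝓝 (S s (A x))) :=
          ((S s).continuous.tendsto (A x)).comp (hcc.gen.2 x hx)
        have T2 : Tendsto (fun h : ℝ => S (t - s - h) y) (𝓝[>] (0:ℝ)) (𝓝 (S (t - s) y)) :=
          tendsto_S_shift hS hts y
        have T3 : Tendsto (fun h : ℝ => S (t - s - h) (h⁻¹ • (S h y - y))) (𝓝[>] (0:ℝ))
            (𝓝 (S (t - s) (A y))) :=
          tendsto_S_shift_apply hS hts (hcc.gen.2 y hy)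
        have T4 : Tendsto (fun h : ℝ =>
            ⟪S s (h⁻¹ • (S h x - x)), S (t - s - h) y⟫ - ⟪S s x, S (t - s - h) (h⁻¹ • (S h y - y))⟫)
            (𝓝[>] (0:ℝ)) (𝓝 (⟪S s (A x), S (t - s) y⟫ - ⟪S s x, S (t - s) (A y)⟫)) :=
          (T1.inner T2).sub ((tendsto_const_nhds (x := S s x)).inner T3)
        rw [hzero] at T4
        refine T4.congr' ?_
        filter_upwards [Ioo_mem_nhdsGT_of_mem (Set.left_mem_Ico.mpr hts)] with h hh
        obtain ⟨hh0, hhts⟩ := hh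
        have e1 : S (s + h) x = S s (S h x) := by
          rw [S_comp_apply hS hs.1 hh0.le]
        have e2 : S (t - s) y = S (t - s - h) (S h y) := by
          rw [S_comp_apply hS (by linarith) hh0.le, sub_add_cancel]
        have e3 : t - (s + h) = t - s - h := by ring
        have ediff : f (s + h) - f s
            = ⟪S s (S h x - x), S (t - s - h) y⟫ - ⟪S s x, S (t - s - h) (S h y - y)⟫ := by
          simp only [hfdef, e3, e1]
          rw [e2, (S s).map_sub, (S (t - s - h)).map_sub, inner_sub_left, inner_sub_right]
          ring
        rw [smul_eq_mul, ediff, mul_sub, ← real_inner_smul_left, ← real_inner_smul_right,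
          ← (S s).map_smul, ← (S (t - s - h)).map_smul]
      have hconst := constant_of_has_deriv_right_zero hcont hderiv t (Set.right_mem_Icc.mpr ht)
      have hft : f t = ⟪S t x, y⟫ := by
        simp only [hfdef, sub_self, hS.map_zero]; rfl
      have hf0 : f 0 = ⟪x, S t y⟫ := by
        simp only [hfdef, sub_zero, hS.map_zero]; rfl
      rw [← hft, ← hf0, hconst]
  have hd := domA_dense hcc
  have step1 : ∀ y ∈ domA, ∀ x : Y, ⟪S t x, y⟫ = ⟪x, S t y⟫ := by
    intro y hy
    have c1 : Continuous fun x : Y => ⟪S t x, y⟫ := ((S t).continuous).inner continuous_const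
    have c2 : Continuous fun x : Y => ⟪x, S t y⟫ := continuous_id.inner continuous_const
    have hfg := Continuous.ext_on hd c1 c2 (fun x hx => main x hx y hy)
    exact fun x => congrFun hfg x
  have c1 : Continuous fun y : Y => ⟪S t x, y⟫ := continuous_const.inner continuous_id
  have c2 : Continuous fun y : Y => ⟪x, S t y⟫ := continuous_const.inner (S t).continuous
  have hfg := Continuous.ext_on hd c1 c2 (fun y hy => step1 y hy x)
  exact congrFun hfg y

lemma S_selfadj (hS : IsC0SemigroupDecay S M ω) (hcc : CommCaseHyp S B domA A μ)
    {t : ℝ} (ht : 0 ≤ t) : adjoint (S t) = S t := by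
  have : IsSelfAdjoint (S t) :=
    ContinuousLinearMap.isSelfAdjoint_iff_isSymmetric.mpr (fun x y => Ssym hS hcc ht x y)
  exact this.adjoint_eq

lemma BB_comm (hS : IsC0SemigroupDecay S M ω) (hcc : CommCaseHyp S B domA A μ)
    {t : ℝ} (ht : 0 ≤ t) (x : Y) :
    B (adjoint B (S t x)) = S t (B (adjoint B x)) := by
  have main : ∀ x ∈ domA, B (adjoint B (S t x)) = S t (B (adjoint B x)) := by
    intro x hx
    rcases eq_or_lt_of_le ht with h0 | hpos
    · rw [← h0, hS.map_zero]; rfl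
    · set g : ℝ → Y := fun s => S (t - s) (B (adjoint B (S s x))) with hgdef
      have hcont : ContinuousOn g (Icc 0 t) := by
        refine contOn_S_app hS (continuousOn_const.sub continuousOn_id)
          (fun s hs => sub_nonneg.mpr hs.2) ?_
        exact (B.comp (adjoint B)).continuous.comp_continuousOn
          ((hS.strong_cont x).mono (fun s hs => hs.1))
      have hderiv : ∀ s ∈ Ico 0 t, HasDerivWithinAt g 0 (Ici s) s := by
        intro s hs
        apply hasDerivWithinAt_of_quot
        have hts : 0 < t - s := sub_pos.mpr hs.2
        have hSx := S_domA hS hcc.gen hx hs.1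
        set u : Y := S s x with hudef
        have hcm := hcc.comm u hSx.1
        have Tw : Tendsto (fun h : ℝ =>
            B (adjoint B (h⁻¹ • (S h u - u))) - h⁻¹ • (S h (B (adjoint B u)) - B (adjoint B u)))
            (𝓝[>] (0:ℝ)) (𝓝 0) := by
          have l1 : Tendsto (fun h : ℝ => B (adjoint B (h⁻¹ • (S h u - u)))) (𝓝[>] (0:ℝ))
              (𝓝 (B (adjoint B (A u)))) :=
            ((B.comp (adjoint B)).continuous.tendsto (A u)).comp (hcc.gen.2 u hSx.1)
          have l2 : Tendsto (fun h : ℝ => h⁻¹ • (S h (B (adjoint B u)) - B (adjoint B u)))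
              (𝓝[>] (0:ℝ)) (𝓝 (A (B (adjoint B u)))) := hcc.gen.2 _ hcm.1
          have := l1.sub l2
          rwa [hcm.2, sub_self] at this
        have T : Tendsto (fun h : ℝ => S (t - s - h)
            (B (adjoint B (h⁻¹ • (S h u - u))) - h⁻¹ • (S h (B (adjoint B u)) - B (adjoint B u))))
            (𝓝[>] (0:ℝ)) (𝓝 0) := by
          have := tendsto_S_shift_apply hS hts Tw
          rwa [(S (t - s)).map_zero] at this
        refine T.congr' ?_
        filter_upwards [Ioo_mem_nhdsGT_of_mem (Set.left_mem_Ico.mpr hts)] with h hh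
        obtain ⟨hh0, hhts⟩ := hh
        have e1 : S (s + h) x = S h u := by
          show _ = S h (S s x)
          rw [S_comp_apply hS hh0.le hs.1, add_comm]
        have e2 : g s = S (t - s - h) (S h (B (adjoint B u))) := by
          show S (t - s) (B (adjoint B (S s x))) = _
          rw [S_comp_apply hS (by linarith : (0:ℝ) ≤ t - s - h) hh0.le, sub_add_cancel]
        have e3 : t - (s + h) = t - s - h := by ring
        have ediff : g (s + h) - g s
            = S (t - s - h) (B (adjoint B (S h u - u)) - (S h (B (adjoint B u)) - B (adjoint B u))) := by
          have lhs1 : g (s + h) = S (t - s - h) (B (adjoint B (S h u))) := by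
            show S (t - (s + h)) (B (adjoint B (S (s + h) x))) = _
            rw [e3, e1]
          rw [lhs1, e2, ← (S (t - s - h)).map_sub]
          congr 1
          simp only [map_sub]
          abel
        rw [ediff, ← (S (t - s - h)).map_smul, (adjoint B).map_smul, B.map_smul]
        simp only [smul_sub]
      have hconst := constant_of_has_deriv_right_zero hcont hderiv t (Set.right_mem_Icc.mpr ht)
      have hgt : g t = B (adjoint B (S t x)) := by
        simp only [hgdef, sub_self, hS.map_zero]; rfl
      have hg0 : g 0 = S t (B (adjoint B x)) := by
        simp only [hgdef, sub_zero, hS.map_zero]; rfl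
      rw [← hgt, ← hg0, hconst]
  have hd := domA_dense hcc
  have hfg := Continuous.ext_on hd
    ((B.comp (adjoint B)).continuous.comp (S t).continuous)
    ((S t).continuous.comp (B.comp (adjoint B)).continuous)
    (fun x hx => main x hx)
  exact congrFun hfg x

lemma F_eq (hS : IsC0SemigroupDecay S M ω) (hcc : CommCaseHyp S B domA A μ)
    {r : ℝ} (hr : 0 ≤ r) (x : Y) :
    S r (B (adjoint B (adjoint (S r) x))) = S r (B (adjoint B (S r x))) := by
  rw [S_selfadj hS hcc hr]

lemma F_integrable_s12 (hS : IsC0SemigroupDecay S M ω) (hcc : CommCaseHyp S B domA A μ) (x : Y) :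
    IntegrableOn (fun r => S r (B (adjoint B (adjoint (S r) x)))) (Ioi (0:ℝ)) := by
  have hcontG : ContinuousOn (fun r => S r (B (adjoint B (S r x)))) (Ici (0:ℝ)) := by
    refine contOn_S_app hS continuousOn_id (fun r hr => hr) ?_
    exact (B.comp (adjoint B)).continuous.comp_continuousOn (hS.strong_cont x)
  have hmeasG : AEStronglyMeasurable (fun r => S r (B (adjoint B (S r x))))
      (volume.restrict (Ioi (0:ℝ))) :=
    (hcontG.mono Ioi_subset_Ici_self).aestronglyMeasurable measurableSet_Ioi
  have hmeas : AEStronglyMeasurable (fun r => S r (B (adjoint B (adjoint (S r) x))))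
      (volume.restrict (Ioi (0:ℝ))) := by
    refine hmeasG.congr ?_
    filter_upwards [ae_restrict_mem measurableSet_Ioi] with r hr
    exact (F_eq hS hcc (le_of_lt hr) x).symm
  set C : ℝ := M * (‖B‖ * (‖adjoint B‖ * (M * ‖x‖))) with hC
  have hbound : ∀ r : ℝ, r ∈ Ioi (0:ℝ) →
      ‖S r (B (adjoint B (adjoint (S r) x)))‖ ≤ C * Real.exp (-ω * r) := by
    intro r hr
    have hr0 : (0:ℝ) ≤ r := le_of_lt hr
    rw [F_eq hS hcc hr0 x]
    have b1 : ‖S r (B (adjoint B (S r x)))‖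
        ≤ (M * Real.exp (-ω * r)) * ‖B (adjoint B (S r x))‖ :=
      le_trans ((S r).le_opNorm _) (mul_le_mul_of_nonneg_right (hS.norm_le r hr0) (norm_nonneg _))
    have b2 : ‖B (adjoint B (S r x))‖ ≤ ‖B‖ * (‖adjoint B‖ * (M * ‖x‖)) := by
      refine le_trans (B.le_opNorm _) (mul_le_mul_of_nonneg_left ?_ (norm_nonneg B))
      refine le_trans ((adjoint B).le_opNorm _)
        (mul_le_mul_of_nonneg_left (S_apply_le hS hr0 x) (norm_nonneg _))
    calc ‖S r (B (adjoint B (S r x)))‖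
        ≤ (M * Real.exp (-ω * r)) * ‖B (adjoint B (S r x))‖ := b1
      _ ≤ (M * Real.exp (-ω * r)) * (‖B‖ * (‖adjoint B‖ * (M * ‖x‖))) := by
          exact mul_le_mul_of_nonneg_left b2 (mul_nonneg hS.M_pos.le (Real.exp_pos _).le)
      _ = C * Real.exp (-ω * r) := by rw [hC]; ring
  refine Integrable.mono' ((exp_neg_integrableOn_Ioi 0 hS.omega_pos).const_mul C) hmeas ?_
  filter_upwards [ae_restrict_mem measurableSet_Ioi] with r hr
  exact hbound r hr

lemma Qinf_comm_S (hS : IsC0SemigroupDecay S M ω) (hcc : CommCaseHyp S B domA A μ)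
    (hQinf : ∀ x, Qinf x = QopInf S B x) {t : ℝ} (ht : 0 ≤ t) (x : Y) :
    Qinf (S t x) = S t (Qinf x) := by
  rw [hQinf, hQinf, QopInf, QopInf,
    ← ContinuousLinearMap.integral_comp_comm (S t) (F_integrable_s12 hS hcc x)]
  refine setIntegral_congr_fun measurableSet_Ioi ?_
  intro r hr
  have hr0 : (0:ℝ) ≤ r := le_of_lt hr
  have e1 : S r (S t x) = S t (S r x) := by
    rw [S_comp_apply hS hr0 ht, add_comm, ← S_comp_apply hS ht hr0]
  calc S r (B (adjoint B (adjoint (S r) (S t x))))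
      = S r (B (adjoint B (S t (S r x)))) := by rw [S_selfadj hS hcc hr0, e1]
    _ = S r (S t (B (adjoint B (S r x)))) := by rw [BB_comm hS hcc ht]
    _ = S t (S r (B (adjoint B (S r x)))) := by
        rw [S_comp_apply hS hr0 ht, add_comm, ← S_comp_apply hS ht hr0]
    _ = S t (S r (B (adjoint B (adjoint (S r) x)))) := by rw [S_selfadj hS hcc hr0]

lemma Qinf_inner_pos (hS : IsC0SemigroupDecay S M ω) (hcc : CommCaseHyp S B domA A μ)
    (hQinf : ∀ x, Qinf x = QopInf S B x) {x : Y} (hx : x ≠ 0) :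
    0 < ⟪Qinf x, x⟫ := by
  have hInt := F_integrable_s12 hS hcc x
  have h1 : ⟪Qinf x, x⟫ = ∫ r in Ioi (0:ℝ), ⟪x, S r (B (adjoint B (adjoint (S r) x)))⟫ := by
    rw [hQinf, QopInf, real_inner_comm, integral_inner hInt]
  have hφint : IntegrableOn (fun r => ⟪x, S r (B (adjoint B (adjoint (S r) x)))⟫) (Ioi (0:ℝ)) :=
    ContinuousLinearMap.integrable_comp (innerSL ℝ x) hInt
  have hφval : ∀ r : ℝ, 0 ≤ r →
      ⟪x, S r (B (adjoint B (adjoint (S r) x)))⟫ = ‖adjoint B (S r x)‖^2 := by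
    intro r hr
    rw [F_eq hS hcc hr x, ← Ssym hS hcc hr x _, ← ContinuousLinearMap.adjoint_inner_left B,
      real_inner_self_eq_norm_sq]
  have hφ0 : ∀ r : ℝ, 0 ≤ r → 0 ≤ ⟪x, S r (B (adjoint B (adjoint (S r) x)))⟫ := by
    intro r hr; rw [hφval r hr]; positivity
  -- find δ
  have hxpos0 : 0 < ‖x‖ := norm_pos_iff.mpr hx
  have hx2 : 0 < ‖x‖^2 := by positivity
  have hcont0 : ContinuousWithinAt (fun r : ℝ => ⟪x, S r x⟫) (Ici 0) 0 :=
    (continuousOn_const.inner (hS.strong_cont x)) 0 Set.self_mem_Ici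
  have hval0 : ⟪x, S 0 x⟫ = ‖x‖^2 := by rw [hS.map_zero]; exact real_inner_self_eq_norm_sq x
  have hev : ∀ᶠ r in 𝓝[Ici 0] (0:ℝ), ‖x‖^2/2 < ⟪x, S r x⟫ := by
    have : Ioi (‖x‖^2/2) ∈ 𝓝 (⟪x, (S 0) x⟫) := by
      rw [hval0]; exact Ioi_mem_nhds (by linarith)
    exact hcont0 this
  obtain ⟨ε, hε, hball⟩ := Metric.mem_nhdsWithin_iff.mp hev
  set δ : ℝ := ε/2 with hδ
  have hδpos : 0 < δ := by positivity
  have hlow : ∀ r ∈ Ioc (0:ℝ) δ, μ^2 * (‖x‖/2)^2 ≤ ⟪x, S r (B (adjoint B (adjoint (S r) x)))⟫ := by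
    intro r hr
    have hr0 : (0:ℝ) ≤ r := hr.1.le
    have hrball : r ∈ Metric.ball (0:ℝ) ε ∩ Ici 0 := by
      constructor
      · rw [Metric.mem_ball, Real.dist_eq, sub_zero, abs_of_nonneg hr0]
        calc r ≤ δ := hr.2
          _ < ε := by rw [hδ]; linarith
      · exact hr0
    have hin : ‖x‖^2/2 < ⟪x, S r x⟫ := hball hrball
    have hSr : ‖x‖/2 ≤ ‖S r x‖ := by
      have hle : ⟪x, S r x⟫ ≤ ‖x‖ * ‖S r x‖ := real_inner_le_norm x _
      have hxpos : 0 < ‖x‖ := norm_pos_iff.mpr hx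
      nlinarith
    have hco := hcc.coercive (S r x)
    rw [hφval r hr0]
    have hμ := hcc.mu_pos
    calc μ^2 * (‖x‖/2)^2 = (μ * (‖x‖/2))^2 := by ring
      _ ≤ (μ * ‖S r x‖)^2 := by
          refine pow_le_pow_left₀ (by positivity) ?_ 2
          exact mul_le_mul_of_nonneg_left hSr hμ.le
      _ ≤ ‖adjoint B (S r x)‖^2 := pow_le_pow_left₀ (by positivity) hco 2
  have hIoc : ∫ r in Ioc (0:ℝ) δ, ⟪x, S r (B (adjoint B (adjoint (S r) x)))⟫
      ≥ (μ^2 * (‖x‖/2)^2) * (volume (Ioc (0:ℝ) δ)).toReal := by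
    refine setIntegral_ge_of_const_le_real measurableSet_Ioc ?_ hlow
      (hφint.mono_set Ioc_subset_Ioi_self)
    rw [Real.volume_Ioc]
    exact ENNReal.ofReal_ne_top
  have hmono : ∫ r in Ioc (0:ℝ) δ, ⟪x, S r (B (adjoint B (adjoint (S r) x)))⟫
      ≤ ∫ r in Ioi (0:ℝ), ⟪x, S r (B (adjoint B (adjoint (S r) x)))⟫ := by
    refine setIntegral_mono_set hφint ?_ (HasSubset.Subset.eventuallyLE Ioc_subset_Ioi_self)
    filter_upwards [ae_restrict_mem measurableSet_Ioi] with r hr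
    exact hφ0 r (le_of_lt hr)
  have hvol : (volume (Ioc (0:ℝ) δ)).toReal = δ := by
    rw [Real.volume_Ioc, sub_zero, ENNReal.toReal_ofReal hδpos.le]
  have hμ := hcc.mu_pos
  have hxpos : 0 < ‖x‖ := norm_pos_iff.mpr hx
  have hcpos : 0 < (μ^2 * (‖x‖/2)^2) * (volume (Ioc (0:ℝ) δ)).toReal := by
    rw [hvol]; positivity
  rw [h1]
  calc (0:ℝ) < (μ^2 * (‖x‖/2)^2) * (volume (Ioc (0:ℝ) δ)).toReal := hcpos
    _ ≤ ∫ r in Ioc (0:ℝ) δ, ⟪x, S r (B (adjoint B (adjoint (S r) x)))⟫ := hIoc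
    _ ≤ ∫ r in Ioi (0:ℝ), ⟪x, S r (B (adjoint B (adjoint (S r) x)))⟫ := hmono

lemma Qh_symm (hQh : IsSqrtOf Qh Qinf) (a b : Y) : ⟪Qh a, b⟫ = ⟪a, Qh b⟫ :=
  (ContinuousLinearMap.isSelfAdjoint_iff_isSymmetric.mp hQh.1) a b

lemma Qh_sq (hQh : IsSqrtOf Qh Qinf) (a : Y) : Qh (Qh a) = Qinf a := by
  rw [← hQh.2.2]; rfl

lemma Qh_inj (hS : IsC0SemigroupDecay S M ω) (hcc : CommCaseHyp S B domA A μ)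
    (hQinf : ∀ x, Qinf x = QopInf S B x) (hQh : IsSqrtOf Qh Qinf) :
    ∀ x : Y, Qh x = 0 → x = 0 := by
  intro x hx
  by_contra hne
  have hpos := Qinf_inner_pos hS hcc hQinf hne
  rw [← Qh_sq hQh, hx, map_zero] at hpos
  simp at hpos

lemma Qh_dense (hS : IsC0SemigroupDecay S M ω) (hcc : CommCaseHyp S B domA A μ)
    (hQinf : ∀ x, Qinf x = QopInf S B x) (hQh : IsSqrtOf Qh Qinf) :
    Dense (Set.range Qh) := by
  have hinj := Qh_inj hS hcc hQinf hQh
  have horth : (LinearMap.range (Qh : Y →ₗ[ℝ] Y))ᗮ = ⊥ := by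
    rw [Submodule.eq_bot_iff]
    intro w hw
    have h1 : ⟪Qh (Qh w), w⟫ = 0 :=
      (Submodule.mem_orthogonal _ w).mp hw (Qh (Qh w)) ⟨Qh w, rfl⟩
    rw [Qh_symm hQh] at h1
    have h2 : Qh w = 0 := inner_self_eq_zero.mp h1
    exact hinj w h2
  have htop := Submodule.topologicalClosure_eq_top_iff.mpr horth
  have : Dense ((LinearMap.range (Qh : Y →ₗ[ℝ] Y) : Submodule ℝ Y) : Set Y) := by
    rw [dense_iff_closure_eq, ← Submodule.topologicalClosure_coe, htop, Submodule.top_coe]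
  rwa [LinearMap.coe_range] at this

lemma Qh_S_bound (hS : IsC0SemigroupDecay S M ω) (hcc : CommCaseHyp S B domA A μ)
    (hQinf : ∀ x, Qinf x = QopInf S B x) (hQh : IsSqrtOf Qh Qinf)
    {t : ℝ} (ht : 0 ≤ t) (y : Y) : ‖Qh (S t y)‖ ≤ ‖Qh y‖ := by
  have hinj := Qh_inj hS hcc hQinf hQh
  by_cases hy : Qh y = 0
  · have hy0 : y = 0 := hinj y hy
    simp [hy0, hy]
  · have hg0 : 0 < ‖Qh y‖ := norm_pos_iff.mpr hy
    set K : ℝ := ‖Qh‖ * (M * ‖y‖) with hK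
    have hb : ∀ t' : ℝ, 0 ≤ t' → ‖Qh (S t' y)‖ ≤ K := by
      intro t' ht'
      exact le_trans (Qh.le_opNorm _)
        (mul_le_mul_of_nonneg_left (S_apply_le hS ht' y) (norm_nonneg _))
    have hKg : ‖Qh y‖ ≤ K := by
      have := hb 0 le_rfl
      rwa [hS.map_zero] at this
    have hKpos : 0 < K := lt_of_lt_of_le hg0 hKg
    have hsq : ∀ t' : ℝ, 0 ≤ t' → ‖Qh (S t' y)‖^2 ≤ ‖Qh y‖ * ‖Qh (S (2*t') y)‖ := by
      intro t' ht'
      have c1 : ‖Qh (S t' y)‖^2 = ⟪Qh (S t' y), Qh (S t' y)⟫ :=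
        (real_inner_self_eq_norm_sq _).symm
      have c2 : ⟪Qh (S t' y), Qh (S t' y)⟫ = ⟪Qh (S (2*t') y), Qh y⟫ := by
        calc ⟪Qh (S t' y), Qh (S t' y)⟫ = ⟪S t' y, Qh (Qh (S t' y))⟫ := Qh_symm hQh _ _
          _ = ⟪S t' y, S t' (Qinf y)⟫ := by rw [Qh_sq hQh, Qinf_comm_S hS hcc hQinf ht']
          _ = ⟪S t' (S t' y), Qinf y⟫ := (Ssym hS hcc ht' _ _).symm
          _ = ⟪S (2*t') y, Qh (Qh y)⟫ := by
              rw [S_comp_apply hS ht' ht', ← Qh_sq hQh]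
              norm_num [two_mul]
          _ = ⟪Qh (S (2*t') y), Qh y⟫ := (Qh_symm hQh _ _).symm
      calc ‖Qh (S t' y)‖^2 = ⟪Qh (S (2*t') y), Qh y⟫ := by rw [c1, c2]
        _ ≤ ‖Qh (S (2*t') y)‖ * ‖Qh y‖ := real_inner_le_norm _ _
        _ = ‖Qh y‖ * ‖Qh (S (2*t') y)‖ := mul_comm _ _
    have claim : ∀ n : ℕ, ∀ t' : ℝ, 0 ≤ t' →
        ‖Qh (S t' y)‖ ≤ ‖Qh y‖ ^ (1 - (1/2:ℝ)^n) * K ^ ((1/2:ℝ)^n) := by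
      intro n
      induction n with
      | zero =>
        intro t' ht'
        simpa [Real.rpow_zero, Real.rpow_one] using hb t' ht'
      | succ n ih =>
        intro t' ht'
        have h2t := ih (2*t') (by linarith)
        have key : ‖Qh (S t' y)‖^2 ≤ ‖Qh y‖ ^ (2 - (1/2:ℝ)^n) * K ^ ((1/2:ℝ)^n) := by
          calc ‖Qh (S t' y)‖^2 ≤ ‖Qh y‖ * ‖Qh (S (2*t') y)‖ := hsq t' ht'
            _ ≤ ‖Qh y‖ * (‖Qh y‖ ^ (1 - (1/2:ℝ)^n) * K ^ ((1/2:ℝ)^n)) :=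
                mul_le_mul_of_nonneg_left h2t hg0.le
            _ = ‖Qh y‖ ^ (2 - (1/2:ℝ)^n) * K ^ ((1/2:ℝ)^n) := by
                have e : (2 - (1/2:ℝ)^n) = 1 + (1 - (1/2:ℝ)^n) := by ring
                rw [e, Real.rpow_add hg0, Real.rpow_one, mul_assoc]
        have hnn : (0:ℝ) ≤ ‖Qh (S t' y)‖ := norm_nonneg _
        have hstep : ‖Qh (S t' y)‖
            ≤ (‖Qh y‖ ^ (2 - (1/2:ℝ)^n) * K ^ ((1/2:ℝ)^n)) ^ (1/2:ℝ) := by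
          have h2 : ((‖Qh (S t' y)‖^2 : ℝ)) ^ (1/2:ℝ)
              ≤ (‖Qh y‖ ^ (2 - (1/2:ℝ)^n) * K ^ ((1/2:ℝ)^n)) ^ (1/2:ℝ) :=
            Real.rpow_le_rpow (by positivity) key (by norm_num)
          calc ‖Qh (S t' y)‖ = ((‖Qh (S t' y)‖^2 : ℝ)) ^ (1/2:ℝ) := by
                rw [← Real.rpow_natCast ‖Qh (S t' y)‖ 2, ← Real.rpow_mul hnn]
                norm_num
            _ ≤ _ := h2
        calc ‖Qh (S t' y)‖
            ≤ (‖Qh y‖ ^ (2 - (1/2:ℝ)^n) * K ^ ((1/2:ℝ)^n)) ^ (1/2:ℝ) := hstep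
          _ = ‖Qh y‖ ^ (1 - (1/2:ℝ)^(n+1)) * K ^ ((1/2:ℝ)^(n+1)) := by
              rw [Real.mul_rpow (by positivity) (by positivity),
                ← Real.rpow_mul hg0.le, ← Real.rpow_mul hKpos.le]
              have e1 : (2 - (1/2:ℝ)^n) * (1/2) = 1 - (1/2:ℝ)^(n+1) := by rw [pow_succ]; ring
              have e2 : ((1/2:ℝ)^n) * (1/2) = (1/2:ℝ)^(n+1) := by rw [pow_succ]
              rw [e1, e2]
    have ha : Tendsto (fun n : ℕ => ((1/2:ℝ))^n) atTop (𝓝 0) :=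
      tendsto_pow_atTop_nhds_zero_of_lt_one (by norm_num) (by norm_num)
    have t1 : Tendsto (fun n : ℕ => ‖Qh y‖ ^ (1 - (1/2:ℝ)^n)) atTop
        (𝓝 (‖Qh y‖ ^ (1 - (0:ℝ)))) :=
      Filter.Tendsto.rpow tendsto_const_nhds (tendsto_const_nhds.sub ha) (Or.inl hg0.ne')
    have t2 : Tendsto (fun n : ℕ => K ^ ((1/2:ℝ)^n)) atTop (𝓝 (K ^ (0:ℝ))) :=
      Filter.Tendsto.rpow tendsto_const_nhds ha (Or.inl hKpos.ne')
    have hlim := t1.mul t2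
    have := ge_of_tendsto' hlim (fun n => claim n t ht)
    simpa [Real.rpow_zero, Real.rpow_one] using this

lemma key_seq (hS : IsC0SemigroupDecay S M ω) (hcc : CommCaseHyp S B domA A μ)
    (hQinf : ∀ x, Qinf x = QopInf S B x) (hQh : IsSqrtOf Qh Qinf)
    {t : ℝ} (ht : 0 ≤ t) (w : Y) (z : ℕ → Y)
    (hz : Tendsto (fun n => Qh (z n)) atTop (𝓝 w)) :
    ∃ c : Y, Tendsto (fun n => Qh (S t (z n))) atTop (𝓝 c) ∧ Qh c = S t (Qh w) := by
  have hcauchy : CauchySeq (fun n => Qh (S t (z n))) := by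
    rw [Metric.cauchySeq_iff]
    intro ε hε
    obtain ⟨N, hN⟩ := Metric.cauchySeq_iff.mp hz.cauchySeq ε hε
    refine ⟨N, fun m hm n hn => ?_⟩
    have hd := hN m hm n hn
    have hb : dist (Qh (S t (z m))) (Qh (S t (z n))) ≤ dist (Qh (z m)) (Qh (z n)) := by
      rw [dist_eq_norm, dist_eq_norm, ← Qh.map_sub, ← (S t).map_sub, ← Qh.map_sub]
      exact Qh_S_bound hS hcc hQinf hQh ht _
    exact lt_of_le_of_lt hb hd
  obtain ⟨c, hc⟩ := cauchySeq_tendsto_of_complete hcauchy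
  refine ⟨c, hc, ?_⟩
  have l1 : Tendsto (fun n => Qh (Qh (S t (z n)))) atTop (𝓝 (Qh c)) :=
    (Qh.continuous.tendsto c).comp hc
  have l2 : Tendsto (fun n => Qh (Qh (S t (z n)))) atTop (𝓝 (S t (Qh w))) := by
    have hT : Tendsto (fun n => S t (Qh (Qh (z n)))) atTop (𝓝 (S t (Qh w))) :=
      (((S t).continuous.comp Qh.continuous).tendsto w).comp hz
    refine hT.congr fun n => ?_
    rw [Qh_sq hQh, Qh_sq hQh, Qinf_comm_S hS hcc hQinf ht]
  exact tendsto_nhds_unique l1 l2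

lemma Qih_Qh (hQih : IsPseudoInvOf Qih Qh) (hinj : ∀ x : Y, Qh x = 0 → x = 0) (z : Y) :
    Qih (Qh z) = z := by
  have h := (hQih (Qh z) ⟨z, rfl⟩).2
  have : Qh (Qih (Qh z) - z) = 0 := by rw [Qh.map_sub, h, sub_self]
  exact sub_eq_zero.mp (hinj _ this)

lemma exists_seq_range (hdense : Dense (Set.range Qh)) (a : Y) :
    ∃ z : ℕ → Y, Tendsto (fun n => Qh (z n)) atTop (𝓝 a) := by
  have ha : a ∈ closure (Set.range Qh) := hdense a
  obtain ⟨u, hu_mem, hu_lim⟩ := mem_closure_iff_seq_limit.mp ha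
  choose z hz using hu_mem
  refine ⟨z, ?_⟩
  refine hu_lim.congr fun n => ?_
  rw [hz n]

lemma S_mem_range (hS : IsC0SemigroupDecay S M ω) (hcc : CommCaseHyp S B domA A μ)
    (hQinf : ∀ x, Qinf x = QopInf S B x) (hQh : IsSqrtOf Qh Qinf)
    {t : ℝ} (ht : 0 ≤ t) {u : Y} (hu : u ∈ Set.range Qh) :
    S t u ∈ Set.range Qh := by
  obtain ⟨a, rfl⟩ := hu
  obtain ⟨z, hz⟩ := exists_seq_range (Qh_dense hS hcc hQinf hQh) a
  obtain ⟨c, _, hQhc⟩ := key_seq hS hcc hQinf hQh ht a z hz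
  exact ⟨c, hQhc⟩

lemma SsymH (hS : IsC0SemigroupDecay S M ω) (hcc : CommCaseHyp S B domA A μ)
    (hQinf : ∀ x, Qinf x = QopInf S B x) (hQh : IsSqrtOf Qh Qinf)
    (hQih : IsPseudoInvOf Qih Qh)
    {t : ℝ} (ht : 0 ≤ t) {u v : Y} (hu : u ∈ Set.range Qh) (hv : v ∈ Set.range Qh) :
    ⟪Qih (S t u), Qih v⟫ = ⟪Qih u, Qih (S t v)⟫ := by
  have hinj := Qh_inj hS hcc hQinf hQh
  obtain ⟨ua, rfl⟩ := hu
  obtain ⟨va, rfl⟩ := hv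
  obtain ⟨a, haq⟩ : S t (Qh ua) ∈ Set.range Qh := S_mem_range hS hcc hQinf hQh ht ⟨ua, rfl⟩
  obtain ⟨z, hz⟩ := exists_seq_range (Qh_dense hS hcc hQinf hQh) va
  obtain ⟨c, hc, hQhc⟩ := key_seq hS hcc hQinf hQh ht va z hz
  have ha' : Qih (S t (Qh ua)) = a := by rw [← haq, Qih_Qh hQih hinj]
  have hc' : Qih (S t (Qh va)) = c := by rw [← hQhc, Qih_Qh hQih hinj]
  rw [ha', hc', Qih_Qh hQih hinj, Qih_Qh hQih hinj]
  have t1 : Tendsto (fun n => ⟪a, Qh (z n)⟫) atTop (𝓝 ⟪a, va⟫) :=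
    Filter.Tendsto.inner tendsto_const_nhds hz
  have t2 : Tendsto (fun n => ⟪ua, Qh (S t (z n))⟫) atTop (𝓝 ⟪ua, c⟫) :=
    Filter.Tendsto.inner tendsto_const_nhds hc
  have e : ∀ n, ⟪a, Qh (z n)⟫ = ⟪ua, Qh (S t (z n))⟫ := by
    intro n
    calc ⟪a, Qh (z n)⟫ = ⟪Qh a, z n⟫ := (Qh_symm hQh _ _).symm
      _ = ⟪S t (Qh ua), z n⟫ := by rw [haq]
      _ = ⟪Qh ua, S t (z n)⟫ := Ssym hS hcc ht _ _
      _ = ⟪ua, Qh (S t (z n))⟫ := Qh_symm hQh _ _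
  exact tendsto_nhds_unique (t1.congr e) t2

end AuxiliaryForStatement12

/-- Under the commuting-case hypothesis, any solution `P` of the
commuting-case ARE satisfies `⟨A₀x, A₀Pz⟩_H = ⟨A₀Px, A₀z⟩_H` for all `x, z ∈ D^P`. -/
theorem statement12
    (S : ℝ → X →L[ℝ] X) (M ω : ℝ) (hS : IsC0SemigroupDecay S M ω)
    (B : U →L[ℝ] X)
    (domA : Set X) (A : X → X) (μ : ℝ) (hcc : CommCaseHyp S B domA A μ)
    (Qinf : X →L[ℝ] X) (hQinf : ∀ x, Qinf x = QopInf S B x)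
    (Qh : X →L[ℝ] X) (hQh : IsSqrtOf Qh Qinf)
    (Qih : X → X) (hQih : IsPseudoInvOf Qih Qh)
    (domA0 : Set X) (A0 : X → X)
    (hA0 : IsGeneratorH S Qih (Set.range Qh) domA0 A0)
    (P : X → X) (hP : IsBddNonnegSelfAdjH Qih (Set.range Qh) P)
    (hsol : IsCommARESol Qih (Set.range Qh) domA0 A0 P) :
    ∀ x ∈ DPset domA0 P, ∀ z ∈ DPset domA0 P,
      hInner Qih (A0 x) (A0 (P z)) = hInner Qih (A0 (P x)) (A0 z) := by
  have hinj : ∀ w : X, Qh w = 0 → w = 0 := Qh_inj hS hcc hQinf hQh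
  have hiQh : ∀ w : X, Qih (Qh w) = w := Qih_Qh hQih hinj
  have hQhQih : ∀ y ∈ Set.range Qh, Qh (Qih y) = y := fun y hy => (hQih y hy).2
  have hQih_sub : ∀ y ∈ Set.range Qh, ∀ y' ∈ Set.range Qh,
      Qih (y - y') = Qih y - Qih y' := by
    rintro y ⟨a, rfl⟩ y' ⟨a', rfl⟩
    rw [← Qh.map_sub, hiQh, hiQh, hiQh]
  have hQih_smul : ∀ (c : ℝ), ∀ y ∈ Set.range Qh, Qih (c • y) = c • Qih y := by
    rintro c y ⟨a, rfl⟩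
    rw [← Qh.map_smul, hiQh, hiQh]
  have hmem_sub : ∀ y ∈ Set.range Qh, ∀ y' ∈ Set.range Qh, y - y' ∈ Set.range Qh := by
    rintro y ⟨a, rfl⟩ y' ⟨a', rfl⟩; exact ⟨a - a', Qh.map_sub a a'⟩
  have hmem_smul : ∀ (c : ℝ), ∀ y ∈ Set.range Qh, c • y ∈ Set.range Qh := by
    rintro c y ⟨a, rfl⟩; exact ⟨c • a, Qh.map_smul c a⟩
  have hA0mem : ∀ w ∈ domA0, w ∈ Set.range Qh := fun w hw => ((hA0.1 w).mp hw).1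
  -- bilinearity of hInner
  have hIsub : ∀ y ∈ Set.range Qh, ∀ y' ∈ Set.range Qh, ∀ v : X,
      hInner Qih (y - y') v = hInner Qih y v - hInner Qih y' v := by
    intro y hy y' hy' v
    unfold hInner
    rw [hQih_sub y hy y' hy', inner_sub_left]
  have hIsmul : ∀ (c : ℝ), ∀ y ∈ Set.range Qh, ∀ v : X,
      hInner Qih (c • y) v = c * hInner Qih y v := by
    intro c y hy v
    unfold hInner
    rw [hQih_smul c y hy, real_inner_smul_left]
  have hIsymm : ∀ y v : X, hInner Qih y v = hInner Qih v y :=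
    fun y v => real_inner_comm _ _
  -- symmetry of A0 in H
  have hA0symm : ∀ w ∈ domA0, ∀ v ∈ domA0,
      hInner Qih (A0 w) v = hInner Qih w (A0 v) := by
    intro w hw v hv
    have hwHs := hA0mem w hw
    have hvHs := hA0mem v hv
    have hwA := hA0.2 w hw
    have hvA := hA0.2 v hv
    have memqw : ∀ h : ℝ, 0 < h → h⁻¹ • (S h w - w) ∈ Set.range Qh := fun h hh =>
      hmem_smul _ _ (hmem_sub _ (S_mem_range hS hcc hQinf hQh hh.le hwHs) _ hwHs)
    have memqv : ∀ h : ℝ, 0 < h → h⁻¹ • (S h v - v) ∈ Set.range Qh := fun h hh =>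
      hmem_smul _ _ (hmem_sub _ (S_mem_range hS hcc hQinf hQh hh.le hvHs) _ hvHs)
    have TF : Tendsto (fun h : ℝ => hInner Qih (h⁻¹ • (S h w - w)) v) (𝓝[>] (0:ℝ))
        (𝓝 (hInner Qih (A0 w) v)) := by
      have hdiff : Tendsto (fun h : ℝ => hInner Qih (h⁻¹ • (S h w - w)) v
          - hInner Qih (A0 w) v) (𝓝[>] (0:ℝ)) (𝓝 0) := by
        have hb : ∀ᶠ h in 𝓝[>] (0:ℝ), ‖hInner Qih (h⁻¹ • (S h w - w)) v
            - hInner Qih (A0 w) v‖ ≤ ‖Qih (h⁻¹ • (S h w - w) - A0 w)‖ * ‖Qih v‖ := by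
          filter_upwards [self_mem_nhdsWithin] with h hh
          have he : hInner Qih (h⁻¹ • (S h w - w)) v - hInner Qih (A0 w) v
              = hInner Qih (h⁻¹ • (S h w - w) - A0 w) v :=
            (hIsub _ (memqw h hh) _ hwA.1 v).symm
          rw [he]
          exact abs_real_inner_le_norm _ _
        have hg : Tendsto (fun h : ℝ => ‖Qih (h⁻¹ • (S h w - w) - A0 w)‖ * ‖Qih v‖)
            (𝓝[>] (0:ℝ)) (𝓝 0) := by
          have := hwA.2.mul_const ‖Qih v‖
          simpa using this
        exact squeeze_zero_norm' hb hg
      have := hdiff.add (tendsto_const_nhds (x := hInner Qih (A0 w) v))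
      simpa using this
    have TG : Tendsto (fun h : ℝ => hInner Qih (h⁻¹ • (S h v - v)) w) (𝓝[>] (0:ℝ))
        (𝓝 (hInner Qih (A0 v) w)) := by
      have hdiff : Tendsto (fun h : ℝ => hInner Qih (h⁻¹ • (S h v - v)) w
          - hInner Qih (A0 v) w) (𝓝[>] (0:ℝ)) (𝓝 0) := by
        have hb : ∀ᶠ h in 𝓝[>] (0:ℝ), ‖hInner Qih (h⁻¹ • (S h v - v)) w
            - hInner Qih (A0 v) w‖ ≤ ‖Qih (h⁻¹ • (S h v - v) - A0 v)‖ * ‖Qih w‖ := by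
          filter_upwards [self_mem_nhdsWithin] with h hh
          have he : hInner Qih (h⁻¹ • (S h v - v)) w - hInner Qih (A0 v) w
              = hInner Qih (h⁻¹ • (S h v - v) - A0 v) w :=
            (hIsub _ (memqv h hh) _ hvA.1 w).symm
          rw [he]
          exact abs_real_inner_le_norm _ _
        have hg : Tendsto (fun h : ℝ => ‖Qih (h⁻¹ • (S h v - v) - A0 v)‖ * ‖Qih w‖)
            (𝓝[>] (0:ℝ)) (𝓝 0) := by
          have := hvA.2.mul_const ‖Qih w‖
          simpa using this
        exact squeeze_zero_norm' hb hg
      have := hdiff.add (tendsto_const_nhds (x := hInner Qih (A0 v) w))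
      simpa using this
    have hFG : ∀ᶠ h in 𝓝[>] (0:ℝ), hInner Qih (h⁻¹ • (S h w - w)) v
        = hInner Qih (h⁻¹ • (S h v - v)) w := by
      filter_upwards [self_mem_nhdsWithin] with h hh
      have hSw : S h w ∈ Set.range Qh := S_mem_range hS hcc hQinf hQh hh.le hwHs
      have hSv : S h v ∈ Set.range Qh := S_mem_range hS hcc hQinf hQh hh.le hvHs
      rw [hIsmul _ _ (hmem_sub _ hSw _ hwHs), hIsmul _ _ (hmem_sub _ hSv _ hvHs),
        hIsub _ hSw _ hwHs, hIsub _ hSv _ hvHs]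
      have hkey : hInner Qih (S h w) v = hInner Qih (S h v) w := by
        unfold hInner
        rw [SsymH hS hcc hQinf hQh hQih hh.le hwHs hvHs]
        exact real_inner_comm _ _
      rw [hkey, hIsymm w v]
    have := tendsto_nhds_unique (TF.congr' hFG) TG
    rw [this, hIsymm]
  -- density kill
  have hkill : ∀ w ∈ Set.range Qh, (∀ v ∈ DPset domA0 P, hInner Qih w v = 0) → w = 0 := by
    intro w hwHs hzero
    have hn : ∀ ε > (0:ℝ), ‖Qih w‖ * ‖Qih w‖ ≤ ‖Qih w‖ * ε := by
      intro ε hε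
      obtain ⟨v, hv, hvnorm⟩ := hsol.1 w hwHs ε hε
      have hvHs : v ∈ Set.range Qh := hA0mem v hv.1
      calc ‖Qih w‖ * ‖Qih w‖ = ⟪Qih w, Qih w⟫ := (real_inner_self_eq_norm_mul_norm _).symm
        _ = hInner Qih (w - v) w + hInner Qih v w := by
            rw [hIsub w hwHs v hvHs w]
            unfold hInner
            ring
        _ = hInner Qih (w - v) w := by
            rw [hIsymm v w, hzero v hv, add_zero]
        _ ≤ ‖Qih (w - v)‖ * ‖Qih w‖ := real_inner_le_norm _ _
        _ ≤ ε * ‖Qih w‖ := mul_le_mul_of_nonneg_right hvnorm.le (norm_nonneg _)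
        _ = ‖Qih w‖ * ε := mul_comm _ _
    have h0 : ‖Qih w‖ = 0 := by
      by_contra hne
      have hpos : 0 < ‖Qih w‖ := lt_of_le_of_ne (norm_nonneg _) (Ne.symm hne)
      have hle : ∀ ε > (0:ℝ), ‖Qih w‖ ≤ ε := by
        intro ε hε
        have := hn ε hε
        exact le_of_mul_le_mul_left (by linarith) hpos
      linarith [hle (‖Qih w‖/2) (by linarith)]
    have hq0 : Qih w = 0 := norm_eq_zero.mp h0
    rw [← hQhQih w hwHs, hq0, map_zero]
  -- the star identity
  have hstar : ∀ u ∈ DPset domA0 P,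
      P (A0 u) = (2:ℝ) • P (A0 (P u)) - A0 (P u) := by
    intro u hu
    have huA : u ∈ domA0 := hu.1
    have hPuA : P u ∈ domA0 := hu.2
    have haHs : A0 u ∈ Set.range Qh := (hA0.2 u huA).1
    have hbHs : A0 (P u) ∈ Set.range Qh := (hA0.2 (P u) hPuA).1
    have hPaHs : P (A0 u) ∈ Set.range Qh := hP.1 _ haHs
    have hPbHs : P (A0 (P u)) ∈ Set.range Qh := hP.1 _ hbHs
    have hw0 : (2:ℝ) • P (A0 (P u)) - P (A0 u) - A0 (P u) = 0 := by
      apply hkill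
      · exact hmem_sub _ (hmem_sub _ (hmem_smul 2 _ hPbHs) _ hPaHs) _ hbHs
      · intro v hv
        have hvHs : v ∈ Set.range Qh := hA0mem v hv.1
        have hare := hsol.2 u hu v hv
        have e1 : hInner Qih ((2:ℝ) • P (A0 (P u)) - P (A0 u) - A0 (P u)) v
            = 2 * hInner Qih (P (A0 (P u))) v - hInner Qih (P (A0 u)) v
              - hInner Qih (A0 (P u)) v := by
          rw [hIsub _ (hmem_sub _ (hmem_smul 2 _ hPbHs) _ hPaHs) _ hbHs,
            hIsub _ (hmem_smul 2 _ hPbHs) _ hPaHs, hIsmul 2 _ hPbHs]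
        rw [e1, hP.2.2.2.2.1 _ hbHs v hvHs, hP.2.2.2.2.1 _ haHs v hvHs,
          hA0symm (P u) hPuA v hv.1]
        linarith
    have h2 : ((2:ℝ) • P (A0 (P u)) - A0 (P u)) - P (A0 u) = 0 := by
      have e : ((2:ℝ) • P (A0 (P u)) - A0 (P u)) - P (A0 u)
          = (2:ℝ) • P (A0 (P u)) - P (A0 u) - A0 (P u) := by abel
      rw [e]; exact hw0
    exact (sub_eq_zero.mp h2).symm
  -- final algebra
  intro x hx z hz
  have haHs : A0 x ∈ Set.range Qh := (hA0.2 x hx.1).1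
  have hbHs : A0 (P x) ∈ Set.range Qh := (hA0.2 (P x) hx.2).1
  have hcHs : A0 z ∈ Set.range Qh := (hA0.2 z hz.1).1
  have hdHs : A0 (P z) ∈ Set.range Qh := (hA0.2 (P z) hz.2).1
  have hPaHs : P (A0 x) ∈ Set.range Qh := hP.1 _ haHs
  have hPbHs : P (A0 (P x)) ∈ Set.range Qh := hP.1 _ hbHs
  have hPcHs : P (A0 z) ∈ Set.range Qh := hP.1 _ hcHs
  have hPdHs : P (A0 (P z)) ∈ Set.range Qh := hP.1 _ hdHs
  have hPsym := hP.2.2.2.2.1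
  have hix := hstar x hx  -- P (A0 x) = 2 • P (A0 (P x)) - A0 (P x)
  have hiz := hstar z hz
  -- d = 2 • P d - P c  and  b = 2 • P b - P a
  have hd_eq : A0 (P z) = (2:ℝ) • P (A0 (P z)) - P (A0 z) := by
    rw [hiz]; abel
  have hb_eq : A0 (P x) = (2:ℝ) • P (A0 (P x)) - P (A0 x) := by
    rw [hix]; abel
  -- key : hInner (P a) d = hInner (P b) c
  have hkey : hInner Qih (P (A0 x)) (A0 (P z)) = hInner Qih (P (A0 (P x))) (A0 z) := by
    calc hInner Qih (P (A0 x)) (A0 (P z))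
        = hInner Qih ((2:ℝ) • P (A0 (P x)) - A0 (P x)) (A0 (P z)) := by rw [← hix]
      _ = 2 * hInner Qih (P (A0 (P x))) (A0 (P z)) - hInner Qih (A0 (P x)) (A0 (P z)) := by
          rw [hIsub _ (hmem_smul 2 _ hPbHs) _ hbHs, hIsmul 2 _ hPbHs]
      _ = 2 * hInner Qih (A0 (P x)) (P (A0 (P z))) - hInner Qih (A0 (P x)) (A0 (P z)) := by
          rw [hPsym _ hbHs _ hdHs]
      _ = hInner Qih ((2:ℝ) • P (A0 (P z)) - A0 (P z)) (A0 (P x)) := by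
          rw [hIsub _ (hmem_smul 2 _ hPdHs) _ hdHs, hIsmul 2 _ hPdHs,
            hIsymm (P (A0 (P z))) (A0 (P x)), hIsymm (A0 (P z)) (A0 (P x))]
      _ = hInner Qih (P (A0 z)) (A0 (P x)) := by rw [← hiz]
      _ = hInner Qih (A0 (P x)) (P (A0 z)) := hIsymm _ _
      _ = hInner Qih (P (A0 (P x))) (A0 z) := (hPsym _ hbHs _ hcHs).symm
  -- main computation
  have e1 : hInner Qih (A0 x) (A0 (P z))
      = 2 * hInner Qih (P (A0 x)) (A0 (P z)) - hInner Qih (P (A0 x)) (A0 z) := by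
    calc hInner Qih (A0 x) (A0 (P z))
        = hInner Qih ((2:ℝ) • P (A0 (P z)) - P (A0 z)) (A0 x) := by
          rw [← hd_eq]; exact hIsymm _ _
      _ = 2 * hInner Qih (P (A0 (P z))) (A0 x) - hInner Qih (P (A0 z)) (A0 x) := by
          rw [hIsub _ (hmem_smul 2 _ hPdHs) _ hPcHs, hIsmul 2 _ hPdHs]
      _ = 2 * hInner Qih (A0 (P z)) (P (A0 x)) - hInner Qih (A0 z) (P (A0 x)) := by
          rw [hPsym _ hdHs _ haHs, hPsym _ hcHs _ haHs]
      _ = 2 * hInner Qih (P (A0 x)) (A0 (P z)) - hInner Qih (P (A0 x)) (A0 z) := by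
          rw [hIsymm (A0 (P z)) (P (A0 x)), hIsymm (A0 z) (P (A0 x))]
  have e2 : hInner Qih (A0 (P x)) (A0 z)
      = 2 * hInner Qih (P (A0 (P x))) (A0 z) - hInner Qih (P (A0 x)) (A0 z) := by
    calc hInner Qih (A0 (P x)) (A0 z)
        = hInner Qih ((2:ℝ) • P (A0 (P x)) - P (A0 x)) (A0 z) := by rw [← hb_eq]
      _ = 2 * hInner Qih (P (A0 (P x))) (A0 z) - hInner Qih (P (A0 x)) (A0 z) := by
          rw [hIsub _ (hmem_smul 2 _ hPbHs) _ hPaHs, hIsmul 2 _ hPbHs]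
  rw [e1, e2, hkey]

end
end
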